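/- arXiv:1911.03689 — 13 statements merged into one kernel-verified Lean document; each statement's English description precedes it below -/
import Mathlib

section
/- Let F be a field of prime characteristic p. If f ∈ F[x] is a nonzero polynomial with f(0) = 0 and φ(f) = c · f for some scalar c ∈ F, then c = 1. (That is, 1 is the only possible eigenvalue of φ on polynomials vanishing at 0.) -/
open Polynomial

/-- The map `φ_r : f(x) ↦ f(x+r) − f(r)` on polynomials over a commutative ring. -/
noncomputable def phiMap {R : Type*} [CommRing R] (r : R) (f : R[X]) : R[X] :=
  f.comp (X + C r) - C (f.eval r)

/-- over a field of prime characteristic `p`, if a nonzero polynomial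
`f` with `f(0) = 0` satisfies `φ(f) = c • f`, then `c = 1`: the only possible
eigenvalue of `φ` on polynomials vanishing at `0` is `1`. -/
theorem phi_eigenvalue_eq_one {F : Type*} [Field F] (p : ℕ) (hp : p.Prime)
    [CharP F p] (f : F[X]) (hf0 : f ≠ 0) (hf : f.eval 0 = 0) (c : F)
    (hc : phiMap (1 : F) f = c • f) : c = 1 := by
  have hn : f.natDegree ≠ 0 := by
    intro h
    rw [Polynomial.eq_C_of_natDegree_eq_zero h] at hf0 hf
    simp at hf
    simp [hf] at hf0
  have key := congrArg (fun g => g.coeff f.natDegree) hc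
  simp only [phiMap, Polynomial.coeff_sub, Polynomial.coeff_smul, smul_eq_mul] at key
  rw [Polynomial.coeff_C, if_neg hn] at key
  have hcomp : (f.comp (X + C 1)).coeff f.natDegree = f.leadingCoeff := by
    have h1 : (X + C (1:F)).natDegree = 1 := Polynomial.natDegree_X_add_C 1
    have h2 : (f.comp (X + C 1)).natDegree = f.natDegree := by
      rw [Polynomial.natDegree_comp, h1, mul_one]
    rw [← h2, Polynomial.coeff_natDegree, Polynomial.leadingCoeff_comp (by rw [h1]; norm_num)]
    rw [Polynomial.leadingCoeff_X_add_C, one_pow, mul_one]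
  rw [hcomp, sub_zero, Polynomial.coeff_natDegree] at key
  have hlc : f.leadingCoeff ≠ 0 := Polynomial.leadingCoeff_ne_zero.mpr hf0
  exact mul_right_cancel₀ hlc (by rw [one_mul, ← key])
end

section
/- Let F be a field of prime characteristic p and let f ∈ F[x] be a monic polynomial with f(0) = 0 and deg f = i ≥ 2. If φ(f) = f, then p divides i, i.e. the degree of f is a multiple of p. -/
open Polynomial

/-- over a field of prime characteristic `p`, if `f` is monic with
`f(0) = 0`, `deg f ≥ 2` and `φ(f) = f`, then `p` divides `deg f`. -/
theorem phi_fixed_degree_multiple_of_p {F : Type*} [Field F] (p : ℕ)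
    (hp : p.Prime) [CharP F p] (f : F[X]) (hmonic : f.Monic)
    (hf0 : f.eval 0 = 0) (hdeg : 2 ≤ f.natDegree)
    (hfix : phiMap (1 : F) f = f) : p ∣ f.natDegree := by
  set n := f.natDegree with hn
  have hn1 : 1 ≤ n := le_trans (by norm_num) hdeg
  have key := congrArg (fun g => g.coeff (n - 1)) hfix
  simp only [phiMap, coeff_sub] at key
  have hne : n - 1 ≠ 0 := by omega
  rw [coeff_C, if_neg hne, sub_zero] at key
  -- rewrite comp as taylor
  have hcomp : f.comp (X + C (1 : F)) = taylor 1 f := (taylor_apply 1 f).symm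
  rw [hcomp, taylor_coeff] at key
  -- the Hasse derivative q has degree ≤ 1
  set q := Polynomial.hasseDeriv (n - 1) f with hq
  have hqdeg : q.natDegree ≤ 1 := by
    have h := Polynomial.natDegree_hasseDeriv_le f (n - 1)
    rw [← hq] at h
    omega
  have hq1 : q.coeff 1 = (n : F) := by
    rw [hq, Polynomial.hasseDeriv_coeff]
    have h1 : 1 + (n - 1) = n := by omega
    rw [h1, hmonic.coeff_natDegree, mul_one]
    rw [Nat.choose_symm hn1, Nat.choose_one_right]
  have hq0 : q.coeff 0 = f.coeff (n - 1) := by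
    rw [hq, Polynomial.hasseDeriv_coeff]
    simp
  have hqeq : q = C (q.coeff 1) * X + C (q.coeff 0) :=
    Polynomial.eq_X_add_C_of_degree_le_one (Polynomial.degree_le_of_natDegree_le hqdeg)
  rw [hqeq] at key
  simp [hq0, hq1] at key
  have : (n : F) = 0 := by linear_combination key
  exact (CharP.cast_eq_zero_iff F p n).mp this
end

section
/- Let p be a prime, n ≥ 1, and F a finite field with q = p^n elements. For every polynomial f ∈ F[x] with deg f ≤ q − 2 and f(0) = 0, one has φ(f) = f if and only if f lies in the F-linear span of the set {x^{p^k} : 0 ≤ k ≤ n−1} ∪ {(x^p − x)^m : 2 ≤ m ≤ p^{n−1} − 1 and m is not a power of p}. -/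
open Polynomial

section Aux
variable {F : Type*} [Field F] {p : ℕ} [hpF : Fact p.Prime] [CharP F p]

lemma xp_sub_x_comp : ((X : F[X]) ^ p - X).comp (X + C 1) = X ^ p - X := by
  have h : ((X : F[X]) + C 1) ^ p = X ^ p + C 1 ^ p := add_pow_char _ _ _
  rw [sub_comp, pow_comp, X_comp, h]
  simp only [map_one, one_pow]
  ring

omit [CharP F p] in
lemma unshift_eq_zero {r : F[X]} (hc : r.comp (X + C 1) = 0) : r = 0 := by
  have h2 : ((X : F[X]) + C 1).comp (X - C 1) = X := by
    rw [add_comp, X_comp, C_comp, sub_add_cancel]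
  have := congrArg (fun s => s.comp (X - C 1)) hc
  simpa [comp_assoc, h2] using this

lemma eval_shift {r : F[X]} (hr : r.comp (X + C 1) = r) (a : F) :
    r.eval (a + 1) = r.eval a := by
  conv_rhs => rw [← hr]
  simp [eval_comp]

lemma eval_natCast {r : F[X]} (hr : r.comp (X + C 1) = r) (m : ℕ) :
    r.eval (m : F) = r.eval 0 := by
  induction m with
  | zero => simp
  | succ k ih => rw [Nat.cast_succ, eval_shift hr, ih]

lemma const_of_fixed {r : F[X]} (hr : r.comp (X + C 1) = r)
    (hdeg : r.natDegree < p) : r = C (r.eval 0) := by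
  have hs : r - C (r.eval 0) = 0 := by
    apply eq_zero_of_natDegree_lt_card_of_eval_eq_zero (r - C (r.eval 0))
      (f := fun k : Fin p => ((k : ℕ) : F))
    · exact fun a b h => Fin.ext (CharP.natCast_injOn_Iio F p a.isLt b.isLt h)
    · intro i
      simp [eval_natCast hr (i : ℕ)]
    · rw [Fintype.card_fin]
      exact lt_of_le_of_lt (natDegree_sub_le _ _) (by simpa using hdeg)
  exact sub_eq_zero.mp hs

omit [CharP F p] in
lemma monic_xp_sub_x : ((X : F[X]) ^ p - X).Monic := by
  apply monic_X_pow_sub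
  simpa using (Nat.one_lt_cast.mpr hpF.out.one_lt : (1 : WithBot ℕ) < p)

omit [CharP F p] in
lemma natDegree_xp_sub_x : ((X : F[X]) ^ p - X).natDegree = p := by
  rw [natDegree_sub_eq_left_of_natDegree_lt] <;>
    simp [hpF.out.one_lt]

lemma fixed_exists : ∀ N (g : F[X]), g.natDegree ≤ N → g.comp (X + C 1) = g →
    ∃ h : F[X], g = h.comp (X ^ p - X) := by
  intro N
  induction N using Nat.strong_induction_on with
  | _ N ih =>
    intro g hgN hg
    by_cases hlt : g.natDegree < p
    · refine ⟨C (g.eval 0), ?_⟩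
      rw [C_comp]; exact const_of_fixed hg hlt
    push_neg at hlt
    have hmon : ((X : F[X]) ^ p - X).Monic := monic_xp_sub_x
    have hdy : ((X : F[X]) ^ p - X).natDegree = p := natDegree_xp_sub_x
    have hdiv : g %ₘ (X ^ p - X) + (X ^ p - X) * (g /ₘ (X ^ p - X)) = g :=
      modByMonic_add_div g (X ^ p - X)
    have hrdeg : (g %ₘ (X ^ p - X)).degree < ((X : F[X]) ^ p - X).degree :=
      degree_modByMonic_lt g hmon
    have hrnat : (g %ₘ (X ^ p - X)).natDegree < p := by
      rcases eq_or_ne (g %ₘ (X ^ p - X)) 0 with h0 | h0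
      · rw [h0, natDegree_zero]; exact hpF.out.pos
      · have := natDegree_lt_natDegree h0 hrdeg
        omega
    have hcompdeg : ((g %ₘ (X ^ p - X)).comp (X + C 1)).degree <
        ((X : F[X]) ^ p - X).degree := by
      rcases eq_or_ne (g %ₘ (X ^ p - X)) 0 with h0 | h0
      · simpa [h0] using hrdeg
      · have hc0 : (g %ₘ (X ^ p - X)).comp (X + C 1) ≠ 0 :=
          fun hc => h0 (unshift_eq_zero hc)
        have hnd : ((g %ₘ (X ^ p - X)).comp (X + C 1)).natDegree =
            (g %ₘ (X ^ p - X)).natDegree := by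
          rw [natDegree_comp, natDegree_X_add_C, mul_one]
        rw [degree_eq_natDegree hc0, hnd, ← degree_eq_natDegree h0]
        exact hrdeg
    have hsum : (g %ₘ (X ^ p - X)).comp (X + C 1) +
        (X ^ p - X) * (g /ₘ (X ^ p - X)).comp (X + C 1) = g := by
      have h2 := congrArg (fun s => s.comp (X + C 1)) hdiv
      simp only [add_comp, mul_comp] at h2
      rwa [xp_sub_x_comp, hg] at h2
    have huniq := div_modByMonic_unique (f := g) ((g /ₘ (X ^ p - X)).comp (X + C 1))
      ((g %ₘ (X ^ p - X)).comp (X + C 1)) hmon ⟨hsum, hcompdeg⟩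
    have hq : (g /ₘ (X ^ p - X)).comp (X + C 1) = g /ₘ (X ^ p - X) := huniq.1.symm
    have hr : (g %ₘ (X ^ p - X)).comp (X + C 1) = g %ₘ (X ^ p - X) := huniq.2.symm
    have hqd : (g /ₘ (X ^ p - X)).natDegree = g.natDegree - p := by
      rw [natDegree_divByMonic g hmon, hdy]
    have hqdeg : (g /ₘ (X ^ p - X)).natDegree < N := by
      have := hpF.out.two_le
      omega
    obtain ⟨h', hh'⟩ := ih _ hqdeg (g /ₘ (X ^ p - X)) le_rfl hq
    have hrconst : g %ₘ (X ^ p - X) = C ((g %ₘ (X ^ p - X)).eval 0) :=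
      const_of_fixed hr hrnat
    exact ⟨X * h' + C ((g %ₘ (X ^ p - X)).eval 0), by
      rw [add_comp, mul_comp, X_comp, C_comp, ← hh', ← hrconst, add_comm, hdiv]⟩
end Aux

/-- over `F = 𝔽_{p^n}`, a polynomial `f` with `deg f ≤ q − 2` and
`f(0) = 0` satisfies `φ(f) = f` iff it lies in the span of the monomials
`x^(p^k)` (`0 ≤ k ≤ n−1`) and the polynomials `(x^p − x)^m`
(`2 ≤ m ≤ p^(n−1) − 1`, `m` not a power of `p`). -/
theorem phi_eigenspace_span {F : Type*} [Field F] [Fintype F] (p n : ℕ)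
    (hp : p.Prime) (hn : 1 ≤ n) (hcard : Fintype.card F = p ^ n)
    (f : F[X]) (hdeg : f.natDegree ≤ p ^ n - 2) (hf0 : f.eval 0 = 0) :
    phiMap (1 : F) f = f ↔
      f ∈ Submodule.span F
        ({g : F[X] | ∃ k ≤ n - 1, g = X ^ p ^ k} ∪
         {g : F[X] | ∃ m : ℕ, 2 ≤ m ∧ m ≤ p ^ (n - 1) - 1 ∧
            (¬ ∃ j : ℕ, m = p ^ j) ∧ g = (X ^ p - X) ^ m}) := by
  haveI hpF : Fact p.Prime := ⟨hp⟩
  -- char F = p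
  haveI : CharP F p := by
    obtain ⟨m, hrp, hcard2⟩ := FiniteField.card F (ringChar F)
    have hpr : p = ringChar F := by
      have hdvd : p ∣ ringChar F ^ (m : ℕ) := by
        rw [← hcard2, hcard]
        exact dvd_pow_self p (by omega)
      exact ((Nat.prime_dvd_prime_iff_eq hp hrp).mp (hp.dvd_of_dvd_pow hdvd))
    exact hpr ▸ ringChar.charP F
  have hp2 : 2 ≤ p := hp.two_le
  have hq2 : 2 ≤ p ^ n := le_trans hp2 (Nat.le_self_pow (by omega) p)
  constructor
  · intro hphi
    rw [phiMap, sub_eq_iff_eq_add] at hphi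
    set c := f.eval 1 with hc
    set g := f - C c * X with hgdef
    have hgfix : g.comp (X + C 1) = g := by
      rw [hgdef, sub_comp, mul_comp, C_comp, X_comp, hphi]
      simp only [map_one, mul_one]
      ring
    obtain ⟨h, hgh⟩ := fixed_exists (p := p) g.natDegree g le_rfl hgfix
    have hgdeg : g.natDegree ≤ p ^ n - 1 := by
      refine le_trans (natDegree_sub_le _ _) (max_le (by omega) ?_)
      refine le_trans (natDegree_mul_le) ?_
      simp only [natDegree_C, natDegree_X]
      omega
    have hgnat : g.natDegree = h.natDegree * p := by
      rw [hgh, natDegree_comp, natDegree_xp_sub_x (F := F) (p := p)]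
    have hhdeg : h.natDegree ≤ p ^ (n - 1) - 1 := by
      have hmulle : h.natDegree * p ≤ p ^ n - 1 := hgnat ▸ hgdeg
      have hlt : h.natDegree * p < p ^ (n - 1) * p := by
        have hpp : p ^ (n - 1) * p = p ^ n := by
          rw [← pow_succ]; congr 1; omega
        omega
      have := Nat.lt_of_mul_lt_mul_right hlt
      omega
    have hh0 : h.coeff 0 = 0 := by
      rw [coeff_zero_eq_eval_zero]
      have : g.eval 0 = h.eval 0 := by
        rw [hgh, eval_comp]
        congr 1
        simp [zero_pow hp.ne_zero]
      rw [← this, hgdef]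
      simp [hf0]
    have hsumrep : g = ∑ m ∈ Finset.range (h.natDegree + 1),
        C (h.coeff m) * (X ^ p - X) ^ m := by
      have e1 : h.comp (X ^ p - X) = ∑ m ∈ Finset.range (h.natDegree + 1),
          ((monomial m (h.coeff m)).comp (X ^ p - X)) := by
        conv_lhs => rw [as_sum_range' h (h.natDegree + 1) (lt_add_one _)]
        exact map_sum (compRingHom _) _ _
      rw [hgh, e1]
      exact Finset.sum_congr rfl fun m _ => monomial_comp m
    have hXmem : (X : F[X]) ∈ Submodule.span F
        ({g : F[X] | ∃ k ≤ n - 1, g = X ^ p ^ k} ∪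
         {g : F[X] | ∃ m : ℕ, 2 ≤ m ∧ m ≤ p ^ (n - 1) - 1 ∧
            (¬ ∃ j : ℕ, m = p ^ j) ∧ g = (X ^ p - X) ^ m}) := by
      apply Submodule.subset_span
      exact Or.inl ⟨0, by omega, by simp⟩
    have hfdecomp : f = C c * X + g := by rw [hgdef]; ring
    rw [hfdecomp, hsumrep]
    apply Submodule.add_mem
    · rw [← smul_eq_C_mul]
      exact Submodule.smul_mem _ _ hXmem
    · apply Submodule.sum_mem
      intro m hm
      rw [Finset.mem_range] at hm
      rcases Nat.eq_zero_or_pos m with rfl | hm1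
      · simp [hh0]
      have hmle : m ≤ p ^ (n - 1) - 1 := by omega
      by_cases hpow : ∃ j : ℕ, m = p ^ j
      · obtain ⟨j, rfl⟩ := hpow
        have hjlt : j + 1 ≤ n - 1 := by
          have hne : p ^ (n - 1) ≠ 0 := pow_ne_zero _ (by omega)
          have h1 : p ^ j < p ^ (n - 1) := by omega
          have := (Nat.pow_lt_pow_iff_right hp.one_lt).mp h1
          omega
        have hkey : ((X : F[X]) ^ p - X) ^ p ^ j = X ^ p ^ (j + 1) - X ^ p ^ j := by
          rw [sub_pow_char_pow, ← pow_mul, pow_succ, mul_comm (p ^ j) p]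
        rw [hkey, mul_sub, ← smul_eq_C_mul, ← smul_eq_C_mul]
        apply Submodule.sub_mem
        · exact Submodule.smul_mem _ _ (Submodule.subset_span
            (Or.inl ⟨j + 1, hjlt, rfl⟩))
        · exact Submodule.smul_mem _ _ (Submodule.subset_span
            (Or.inl ⟨j, by omega, rfl⟩))
      · have hm2 : 2 ≤ m := by
          rcases Nat.lt_or_ge m 2 with hlt2 | hge
          · interval_cases m
            exact absurd ⟨0, (pow_zero p).symm⟩ hpow
          · exact hge
        rw [← smul_eq_C_mul]
        exact Submodule.smul_mem _ _ (Submodule.subset_span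
          (Or.inr ⟨m, hm2, hmle, hpow, rfl⟩))
  · intro hmem
    have hadd : ∀ a b : F[X], phiMap (1:F) a = a → phiMap (1:F) b = b →
        phiMap (1:F) (a + b) = a + b := by
      intro a b ha hb
      have key : phiMap (1:F) (a + b) = phiMap (1:F) a + phiMap (1:F) b := by
        simp only [phiMap, add_comp, eval_add, map_add]
        ring
      rw [key, ha, hb]
    have hsmul : ∀ (t : F) (a : F[X]), phiMap (1:F) a = a →
        phiMap (1:F) (t • a) = t • a := by
      intro t a ha
      have key : phiMap (1:F) (t • a) = t • phiMap (1:F) a := by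
        rw [smul_eq_C_mul, smul_eq_C_mul, phiMap, phiMap, mul_comp, C_comp,
          eval_mul, eval_C, C_mul, ← mul_sub]
      rw [key, ha]
    refine Submodule.span_induction (p := fun x _ => phiMap (1:F) x = x) ?_
      (by simp [phiMap]) (fun a b _ _ ha hb => hadd a b ha hb)
      (fun t a _ ha => hsmul t a ha) hmem
    intro x hx
    rcases hx with ⟨k, _, rfl⟩ | ⟨m, hm2, _, _, rfl⟩
    · show (X ^ p ^ k : F[X]).comp (X + C 1) - C (eval 1 (X ^ p ^ k)) = X ^ p ^ k
      rw [pow_comp, X_comp, add_pow_char_pow]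
      simp
    · show ((X ^ p - X : F[X]) ^ m).comp (X + C 1) -
        C (eval 1 ((X ^ p - X : F[X]) ^ m)) = (X ^ p - X) ^ m
      rw [pow_comp, xp_sub_x_comp]
      simp [zero_pow (by omega : m ≠ 0)]
end

section
/- Let F be a field of prime characteristic p and let f ∈ F[x] satisfy f(0) = 0. If (φ − id)^k(f) = 0 for a natural number k, then (φ − id)^{k+1}(x · f) = 0. (Multiplication by x sends the k-th generalized eigenspace of φ for eigenvalue 1 into the (k+1)-st.) -/
open Polynomial

private noncomputable def psi {F : Type*} [Field F] (g : F[X]) : F[X] :=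
  phiMap (1 : F) g - g

private lemma psi_def {F : Type*} [Field F] :
    (fun g : F[X] => phiMap (1 : F) g - g) = psi := rfl

private lemma psi_zero {F : Type*} [Field F] : psi (0 : F[X]) = 0 := by
  simp [psi, phiMap]

private lemma psi_add {F : Type*} [Field F] (a b : F[X]) :
    psi (a + b) = psi a + psi b := by
  simp only [psi, phiMap, add_comp, eval_add, C_add]; ring

private lemma psi_CX {F : Type*} [Field F] (c : F) : psi (C c * X) = 0 := by
  simp only [psi, phiMap, mul_comp, C_comp, X_comp, eval_mul, eval_C, eval_X, C_1]
  ring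

private lemma psi_eval0 {F : Type*} [Field F] (f : F[X]) :
    (psi f).eval 0 = - f.eval 0 := by
  simp [psi, phiMap, eval_comp]

private lemma iter_zero {F : Type*} [Field F] (n : ℕ) : psi^[n] (0 : F[X]) = 0 :=
  Function.iterate_fixed psi_zero n

private lemma iter_add {F : Type*} [Field F] (n : ℕ) (a b : F[X]) :
    psi^[n] (a + b) = psi^[n] a + psi^[n] b := by
  induction n generalizing a b with
  | zero => simp
  | succ n ih => simp [Function.iterate_succ_apply, psi_add, ih]

private lemma psi_mulX {F : Type*} [Field F] (f : F[X]) :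
    psi (X * f) = X * psi f + psi f + f + C (f.eval 1) * X := by
  simp only [psi, phiMap, mul_comp, X_comp, eval_mul, eval_X, C_mul, C_1]
  ring

private lemma key {F : Type*} [Field F] (k : ℕ) :
    ∀ f : F[X], f.eval 0 = 0 → psi^[k] f = 0 → psi^[k+1] (X * f) = 0 := by
  induction k with
  | zero =>
    intro f _ h
    simp only [Function.iterate_zero, id] at h
    subst h
    simpa using psi_zero
  | succ k ih =>
    intro f hf0 h
    rw [Function.iterate_succ_apply, psi_mulX, iter_add, iter_add, iter_add]
    have h1 : psi^[k+1] (X * psi f) = 0 := by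
      apply ih
      · rw [psi_eval0, hf0, neg_zero]
      · rwa [← Function.iterate_succ_apply]
    have h2 : psi^[k+1] (psi f) = 0 := by
      rw [← Function.iterate_succ_apply, Function.iterate_succ_apply', h, psi_zero]
    have h4 : psi^[k+1] (C (f.eval 1) * X) = 0 := by
      rw [Function.iterate_succ_apply, psi_CX, iter_zero]
    rw [h1, h2, h, h4]; simp

/-- over a field of prime characteristic `p`, if `f(0) = 0` and
`(φ − id)^k(f) = 0`, then `(φ − id)^(k+1)(x·f) = 0`: multiplication by `x`
sends the `k`-th generalized eigenspace of `φ` (eigenvalue 1) into the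
`(k+1)`-st. -/
theorem mul_X_generalized_eigenspace {F : Type*} [Field F] (p : ℕ)
    (hp : p.Prime) [CharP F p] (f : F[X]) (hf0 : f.eval 0 = 0) (k : ℕ)
    (hker : (fun g : F[X] => phiMap (1 : F) g - g)^[k] f = 0) :
    (fun g : F[X] => phiMap (1 : F) g - g)^[k + 1] (X * f) = 0 := by
  rw [psi_def] at hker ⊢
  exact key k f hf0 hker
end

section
/- Let p be a prime, n ≥ 2, F a finite field with q = p^n elements, and 1 ≤ m ≤ p − 1. For every polynomial f ∈ F[x] with deg f ≤ q − 2 and f(0) = 0, one has (φ − id)^m(f) = 0 if and only if f lies in the F-linear span of the set {x^j (x^p − x)^i : 0 ≤ j ≤ m−1, 1 ≤ i ≤ p^{n−1} − 1} ∪ {x^k : 1 ≤ k ≤ m}. -/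
open Polynomial

namespace PhiAux

variable {F : Type*} [Field F]

/-- Finite difference operator. -/
noncomputable def dlt (g : F[X]) : F[X] := g.comp (X + 1) - g

lemma dlt_C (c : F) : dlt (C c) = 0 := by simp [dlt]

lemma dlt_zero : dlt (0 : F[X]) = 0 := by simp [dlt]

lemma dlt_add (a b : F[X]) : dlt (a + b) = dlt a + dlt b := by
  simp only [dlt, add_comp]; ring

lemma dlt_C_mul (c : F) (a : F[X]) : dlt (C c * a) = C c * dlt a := by
  simp only [dlt, mul_comp, C_comp]; ring

lemma natDegree_comp_X_add_one (g : F[X]) : (g.comp (X + 1)).natDegree = g.natDegree := by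
  rw [natDegree_comp]
  have h1 : ((X : F[X]) + 1).natDegree = 1 := by simpa using natDegree_X_add_C (1 : F)
  rw [h1, mul_one]

lemma dlt_natDegree_le (g : F[X]) : (dlt g).natDegree ≤ g.natDegree := by
  refine (natDegree_sub_le _ _).trans ?_
  simp [natDegree_comp_X_add_one]

lemma dlt_natDegree_lt (g : F[X]) (hg : g.natDegree ≠ 0) :
    (dlt g).natDegree < g.natDegree := by
  have hg0 : g ≠ 0 := fun h => hg (by simp [h])
  by_cases h0 : dlt g = 0
  · simpa [h0] using Nat.pos_of_ne_zero hg
  have hc0 : g.comp (X + 1) ≠ 0 := by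
    intro h
    have := natDegree_comp_X_add_one g
    rw [h] at this
    exact hg (by simpa using this.symm)
  have hdeg : (g.comp (X + 1)).degree = g.degree := by
    rw [degree_eq_natDegree hc0, degree_eq_natDegree hg0, natDegree_comp_X_add_one]
  have hlc : (g.comp (X + 1)).leadingCoeff = g.leadingCoeff := by
    have h1 : (X + 1 : F[X]).natDegree ≠ 0 := by
      simpa using natDegree_X_add_C (1 : F) ▸ one_ne_zero
    rw [leadingCoeff_comp h1]
    have : (X + 1 : F[X]).leadingCoeff = 1 := by
      simpa [Monic] using monic_X_add_C (1 : F)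
    simp [this]
  have := degree_sub_lt hdeg hc0 hlc
  rw [hdeg] at this
  exact natDegree_lt_natDegree h0 this

lemma dlt_coeff_eq_zero_of_le (g : F[X]) {k : ℕ} (h : g.natDegree ≤ k) :
    (dlt g).coeff k = 0 := by
  by_cases hg : g.natDegree = 0
  · obtain ⟨c, rfl⟩ := natDegree_eq_zero.1 hg
    simp [dlt_C]
  · exact coeff_eq_zero_of_natDegree_lt (lt_of_lt_of_le (dlt_natDegree_lt g hg) h)

lemma dlt_coeff_pred (g : F[X]) (hg : g.natDegree ≠ 0) :
    (dlt g).coeff (g.natDegree - 1) = (g.natDegree : F) * g.leadingCoeff := by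
  set d := g.natDegree with hd
  have hlt : g.eraseLead.natDegree ≤ d - 1 := by
    have := eraseLead_natDegree_le g
    omega
  conv_lhs => rw [← eraseLead_add_C_mul_X_pow g, dlt_add, dlt_C_mul]
  rw [coeff_add, dlt_coeff_eq_zero_of_le _ hlt, coeff_C_mul]
  have hXd : dlt (X ^ d : F[X]) = (X + 1) ^ d - X ^ d := by
    simp [dlt]
  rw [hXd, coeff_sub, coeff_X_add_one_pow, coeff_X_pow]
  have h1 : d - 1 ≠ d := by omega
  have h2 : d.choose (d - 1) = d := by
    rw [Nat.choose_symm (by omega : 1 ≤ d), Nat.choose_one_right]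
  simp [h1, h2, mul_comm]

lemma dlt_exact {g : F[X]} (hg0 : g ≠ 0) (hd : g.natDegree ≠ 0)
    (hchar : (g.natDegree : F) ≠ 0) :
    dlt g ≠ 0 ∧ (dlt g).natDegree = g.natDegree - 1 := by
  have hc : (dlt g).coeff (g.natDegree - 1) ≠ 0 := by
    rw [dlt_coeff_pred g hd]
    exact mul_ne_zero hchar (leadingCoeff_ne_zero.2 hg0)
  have hne : dlt g ≠ 0 := fun h => hc (by simp [h])
  refine ⟨hne, le_antisymm ?_ (le_natDegree_of_ne_zero hc)⟩
  have := dlt_natDegree_lt g hd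
  omega

lemma dlt_iter_exact (p : ℕ) [Fact p.Prime] [CharP F p] {g : F[X]} (hg0 : g ≠ 0)
    (t : ℕ) (hdig : ∀ s < t, ¬ p ∣ (g.natDegree - s)) :
    dlt^[t] g ≠ 0 ∧ (dlt^[t] g).natDegree = g.natDegree - t := by
  induction t with
  | zero => exact ⟨hg0, rfl⟩
  | succ t ih =>
    obtain ⟨h1, h2⟩ := ih (fun s hs => hdig s (by omega))
    have hpos : g.natDegree - t ≠ 0 := by
      intro h
      exact hdig t (by omega) (h ▸ dvd_zero p)
    have hnd : (dlt^[t] g).natDegree ≠ 0 := by rw [h2]; exact hpos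
    have hchar : ((dlt^[t] g).natDegree : F) ≠ 0 := by
      rw [h2]
      rw [Ne, CharP.cast_eq_zero_iff F p]
      exact hdig t (by omega)
    obtain ⟨h3, h4⟩ := dlt_exact h1 hnd hchar
    rw [Function.iterate_succ_apply']
    exact ⟨h3, by rw [h4, h2]; omega⟩

lemma dlt_iter_eq_C : ∀ (t : ℕ) (g : F[X]), g.natDegree ≤ t → ∃ c, dlt^[t] g = C c := by
  intro t
  induction t with
  | zero =>
    intro g hg
    exact ⟨g.coeff 0, by simpa using (eq_C_of_natDegree_eq_zero (by omega))⟩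
  | succ t ih =>
    intro g hg
    rw [Function.iterate_succ_apply]
    by_cases h : g.natDegree = 0
    · obtain ⟨c, rfl⟩ := natDegree_eq_zero.1 h
      rw [dlt_C]
      exact ih 0 (by simp)
    · exact ih _ (by have := dlt_natDegree_lt g h; omega)

lemma dlt_iter_eq_zero {g : F[X]} {t : ℕ} (h : g.natDegree < t) : dlt^[t] g = 0 := by
  obtain ⟨s, rfl⟩ : ∃ s, t = s + 1 := ⟨t - 1, by omega⟩
  obtain ⟨c, hc⟩ := dlt_iter_eq_C s g (by omega)
  rw [Function.iterate_succ_apply', hc, dlt_C]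

lemma comp_inv (p : ℕ) [Fact p.Prime] [CharP F p] (i : ℕ) :
    (((X : F[X]) ^ p - X) ^ i).comp (X + 1) = ((X : F[X]) ^ p - X) ^ i := by
  rw [pow_comp, sub_comp, pow_comp, X_comp]
  rw [show ((X : F[X]) + 1) ^ p = X ^ p + 1 ^ p from add_pow_char _ _ _]
  ring

lemma dlt_mul_inv (a h : F[X]) (hh : h.comp (X + 1) = h) :
    dlt (a * h) = dlt a * h := by
  simp only [dlt, mul_comp, hh]; ring

lemma dlt_iter_mul_inv (t : ℕ) (a h : F[X]) (hh : h.comp (X + 1) = h) :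
    dlt^[t] (a * h) = dlt^[t] a * h := by
  induction t generalizing a with
  | zero => rfl
  | succ t ih =>
    rw [Function.iterate_succ_apply, Function.iterate_succ_apply, dlt_mul_inv _ _ hh, ih]

/-- the map `ψ = φ − id` as a plain function -/
noncomputable def psi (g : F[X]) : F[X] := phiMap (1 : F) g - g

lemma psi_add (a b : F[X]) : psi (a + b) = psi a + psi b := by
  simp only [psi, phiMap, add_comp, eval_add, C_add]; ring

lemma psi_C_mul (c : F) (a : F[X]) : psi (C c * a) = C c * psi a := by
  simp only [psi, phiMap, mul_comp, C_comp, eval_mul, eval_C, C_mul]; ring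

lemma psi_iter_add (t : ℕ) (a b : F[X]) : psi^[t] (a + b) = psi^[t] a + psi^[t] b := by
  induction t generalizing a b with
  | zero => rfl
  | succ t ih => rw [Function.iterate_succ_apply', Function.iterate_succ_apply',
      Function.iterate_succ_apply', ih, psi_add]

lemma psi_iter_C_mul (t : ℕ) (c : F) (a : F[X]) : psi^[t] (C c * a) = C c * psi^[t] a := by
  induction t generalizing a with
  | zero => rfl
  | succ t ih => rw [Function.iterate_succ_apply', Function.iterate_succ_apply', ih, psi_C_mul]

lemma psi_iter (t : ℕ) (g : F[X]) (hg : g.eval 0 = 0) :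
    psi^[t] g = dlt^[t] g - C ((dlt^[t] g).eval 0) := by
  induction t with
  | zero => simp [hg]
  | succ t ih =>
    rw [Function.iterate_succ_apply', ih, Function.iterate_succ_apply']
    set h := dlt^[t] g with hh
    simp only [psi, phiMap, dlt, sub_comp, C_comp, eval_sub, eval_C, C_sub, eval_comp,
      eval_add, eval_X, eval_one, C_1, zero_add]
    ring

lemma psi_iter_eq_zero_iff (t : ℕ) (g : F[X]) (hg : g.eval 0 = 0) :
    psi^[t] g = 0 ↔ ∃ c, dlt^[t] g = C c := by
  rw [psi_iter t g hg, sub_eq_zero]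
  constructor
  · exact fun h => ⟨_, h⟩
  · rintro ⟨c, hc⟩; rw [hc]; simp

lemma gen2_ker (m k : ℕ) (hk1 : 1 ≤ k) (hk2 : k ≤ m) : psi^[m] (X ^ k : F[X]) = 0 := by
  rw [psi_iter_eq_zero_iff m _ (by simp [zero_pow (by omega : k ≠ 0)])]
  exact dlt_iter_eq_C m _ (by simp [hk2])

lemma gen1_ker (p : ℕ) [Fact p.Prime] [CharP F p] (m j i : ℕ) (hj : j < m) (hi : 1 ≤ i) :
    psi^[m] ((X : F[X]) ^ j * (X ^ p - X) ^ i) = 0 := by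
  have hp2 : p ≠ 0 := (Fact.out : p.Prime).ne_zero
  rw [psi_iter_eq_zero_iff]
  · refine ⟨0, ?_⟩
    rw [dlt_iter_mul_inv m _ _ (comp_inv p i), dlt_iter_eq_zero (by simp [hj]), zero_mul, map_zero]
  · simp [zero_pow hp2, zero_pow (by omega : i ≠ 0)]

end PhiAux
namespace PhiAux

variable {F : Type*} [Field F]

lemma psi_zero : psi (0 : F[X]) = 0 := by simp [psi, phiMap]

lemma psi_iter_zero (t : ℕ) : psi^[t] (0 : F[X]) = 0 :=
  Function.iterate_fixed psi_zero t

lemma fwd (p n : ℕ) (hp : p.Prime) [Fact p.Prime] [CharP F p]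
    (hn : 2 ≤ n) (m : ℕ) (hm1 : 1 ≤ m) :
    ∀ (d : ℕ) (f : F[X]), f.natDegree ≤ d → f.natDegree ≤ p ^ n - 2 → f.eval 0 = 0 →
      psi^[m] f = 0 →
      f ∈ Submodule.span F
        ({g : F[X] | ∃ j ≤ m - 1, ∃ i : ℕ, 1 ≤ i ∧ i ≤ p ^ (n - 1) - 1 ∧
            g = X ^ j * (X ^ p - X) ^ i} ∪
         {g : F[X] | ∃ k : ℕ, 1 ≤ k ∧ k ≤ m ∧ g = X ^ k}) := by
  intro d
  induction d with
  | zero =>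
    intro f hfd hdeg hf0 hker
    have hz : f = 0 := by
      obtain ⟨c, hc⟩ := natDegree_eq_zero.1 (by omega : f.natDegree = 0)
      rw [← hc] at hf0 ⊢
      rw [eval_C] at hf0
      rw [hf0, map_zero]
    simp [hz]
  | succ d ih =>
    intro f hfd hdeg hf0 hker
    by_cases hf : f = 0
    · simp [hf]
    have hnd : f.natDegree ≠ 0 := by
      intro h0
      obtain ⟨c, hc⟩ := natDegree_eq_zero.1 h0
      apply hf
      rw [← hc] at hf0 ⊢
      rw [eval_C] at hf0
      rw [hf0, map_zero]
    set D := f.natDegree with hD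
    obtain ⟨c, hc⟩ := (psi_iter_eq_zero_iff m f hf0).1 hker
    have hp2 : 2 ≤ p := hp.two_le
    have hdm : p * (D / p) + D % p = D := Nat.div_add_mod D p
    have hmod : D % p < p := Nat.mod_lt _ hp.pos
    obtain ⟨g, hgS, hgmono, hgdeg, hg0, hgker⟩ :
        ∃ g : F[X],
          g ∈ ({g : F[X] | ∃ j ≤ m - 1, ∃ i : ℕ, 1 ≤ i ∧ i ≤ p ^ (n - 1) - 1 ∧
              g = X ^ j * (X ^ p - X) ^ i} ∪
            {g : F[X] | ∃ k : ℕ, 1 ≤ k ∧ k ≤ m ∧ g = X ^ k}) ∧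
          g.Monic ∧ g.natDegree = D ∧ g.eval 0 = 0 ∧ psi^[m] g = 0 := by
      rcases Nat.eq_zero_or_pos (D / p) with hi | hi
      · -- small degree case : D < p
        have ht0 : p * (D / p) = 0 := by rw [hi, mul_zero]
        have hDp : D < p := by omega
        have hDm : D ≤ m := by
          by_contra hcon
          have hdig : ∀ s < m, ¬ p ∣ (D - s) := by
            intro s hs hdvd
            have := Nat.le_of_dvd (by omega) hdvd
            omega
          obtain ⟨-, h2⟩ := dlt_iter_exact p hf m hdig
          rw [hc, natDegree_C] at h2
          omega
        refine ⟨X ^ D, Or.inr ⟨D, by omega, hDm, rfl⟩, monic_X_pow D, natDegree_X_pow D,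
          by simp [zero_pow hnd], gen2_ker m D (by omega) hDm⟩
      · -- large degree case
        set i := D / p with hi'
        set j := D % p with hj'
        have hjm : j < m := by
          by_contra hcon
          push_neg at hcon
          have hdig : ∀ s < m, ¬ p ∣ (D - s) := by
            intro s hs hdvd
            have h2 : p ∣ (D - s) - p * i := Nat.dvd_sub hdvd (dvd_mul_right p i)
            have h3 : (D - s) - p * i = j - s := by omega
            rw [h3] at h2
            have := Nat.le_of_dvd (by omega) h2
            omega
          obtain ⟨-, h2⟩ := dlt_iter_exact p hf m hdig
          rw [hc, natDegree_C] at h2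
          have hpt : p ≤ p * i := Nat.le_mul_of_pos_right p hi
          omega
        have hq : p ^ n = p * p ^ (n - 1) := by
          conv_lhs => rw [show n = (n - 1) + 1 by omega]
          rw [pow_succ']
        have hi2 : i ≤ p ^ (n - 1) - 1 := by
          have h1 : p * i < p * p ^ (n - 1) := by omega
          have h2 : i < p ^ (n - 1) := Nat.lt_of_mul_lt_mul_left h1
          omega
        have hmX : ((X : F[X]) ^ p - X).Monic := by
          apply monic_X_pow_sub
          rw [degree_X]
          exact_mod_cast hp.one_lt
        have hdXp : ((X : F[X]) ^ p - X).natDegree = p := by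
          rw [natDegree_sub_eq_left_of_natDegree_lt (by rw [natDegree_X, natDegree_X_pow]; omega),
            natDegree_X_pow]
        have hmg : ((X : F[X]) ^ j * (X ^ p - X) ^ i).Monic :=
          (monic_X_pow j).mul (hmX.pow i)
        have hdg : ((X : F[X]) ^ j * (X ^ p - X) ^ i).natDegree = D := by
          rw [Monic.natDegree_mul (monic_X_pow j) (hmX.pow i), natDegree_X_pow,
            hmX.natDegree_pow, hdXp]
          have : i * p = p * i := mul_comm i p
          omega
        refine ⟨X ^ j * (X ^ p - X) ^ i,
          Or.inl ⟨j, by omega, i, hi, hi2, rfl⟩, hmg, hdg, ?_,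
          gen1_ker p m j i hjm hi⟩
        simp [zero_pow hp.ne_zero, zero_pow (by omega : i ≠ 0)]
    -- subtraction step
    set lc := f.leadingCoeff with hlc
    have hlc0 : lc ≠ 0 := leadingCoeff_ne_zero.2 hf
    have hg_ne : g ≠ 0 := hgmono.ne_zero
    have hClcg_ne : C lc * g ≠ 0 := mul_ne_zero (by simpa using hlc0) hg_ne
    have hdegeq : f.degree = (C lc * g).degree := by
      rw [degree_eq_natDegree hf, degree_eq_natDegree hClcg_ne, natDegree_C_mul hlc0, hgdeg]
    have hlceq : f.leadingCoeff = (C lc * g).leadingCoeff := by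
      rw [leadingCoeff_mul, leadingCoeff_C, hgmono.leadingCoeff, mul_one]
    have hsub := degree_sub_lt hdegeq hf hlceq
    have key : C lc * g ∈ Submodule.span F
        ({g : F[X] | ∃ j ≤ m - 1, ∃ i : ℕ, 1 ≤ i ∧ i ≤ p ^ (n - 1) - 1 ∧
            g = X ^ j * (X ^ p - X) ^ i} ∪
         {g : F[X] | ∃ k : ℕ, 1 ≤ k ∧ k ≤ m ∧ g = X ^ k}) := by
      rw [← smul_eq_C_mul]
      exact Submodule.smul_mem _ lc (Submodule.subset_span hgS)
    by_cases hf' : f - C lc * g = 0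
    · have : f = C lc * g := by rwa [sub_eq_zero] at hf'
      rw [this]
      exact key
    · have h1 : (f - C lc * g).natDegree < D := natDegree_lt_natDegree hf' hsub
      have hkerf' : psi^[m] (f - C lc * g) = 0 := by
        have e : f - C lc * g = f + C (-lc) * g := by
          rw [map_neg]
          ring
        rw [e, psi_iter_add, psi_iter_C_mul, hker, hgker, mul_zero, add_zero]
      have h2 := ih (f - C lc * g) (by omega) (by omega)
        (by simp [eval_sub, eval_mul, eval_C, hf0, hg0]) hkerf'
      have : f = (f - C lc * g) + C lc * g := by ring
      rw [this]
      exact Submodule.add_mem _ h2 key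

end PhiAux


/-- over `F = 𝔽_{p^n}` with `n ≥ 2` and `1 ≤ m ≤ p − 1`, a polynomial
`f` with `deg f ≤ q − 2` and `f(0) = 0` satisfies `(φ − id)^m(f) = 0` iff it lies
in the span of `{x^j (x^p − x)^i : 0 ≤ j ≤ m−1, 1 ≤ i ≤ p^(n−1) − 1}` together
with `{x^k : 1 ≤ k ≤ m}`. -/
theorem phi_generalized_eigenspace_span {F : Type*} [Field F] [Fintype F]
    (p n : ℕ) (hp : p.Prime) (hn : 2 ≤ n) (hcard : Fintype.card F = p ^ n)
    (m : ℕ) (hm1 : 1 ≤ m) (hm2 : m ≤ p - 1)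
    (f : F[X]) (hdeg : f.natDegree ≤ p ^ n - 2) (hf0 : f.eval 0 = 0) :
    (fun g : F[X] => phiMap (1 : F) g - g)^[m] f = 0 ↔
      f ∈ Submodule.span F
        ({g : F[X] | ∃ j ≤ m - 1, ∃ i : ℕ, 1 ≤ i ∧ i ≤ p ^ (n - 1) - 1 ∧
            g = X ^ j * (X ^ p - X) ^ i} ∪
         {g : F[X] | ∃ k : ℕ, 1 ≤ k ∧ k ≤ m ∧ g = X ^ k}) := by
  haveI : Fact p.Prime := ⟨hp⟩
  haveI hcharF : CharP F p := by
    obtain ⟨k, hrp, hk⟩ := FiniteField.card F (ringChar F)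
    have hr : ringChar F = p := by
      have h1 : ringChar F ∣ p ^ n := by
        rw [← hcard, hk]
        exact dvd_pow_self _ (by exact_mod_cast k.pos.ne')
      have h2 : ringChar F ∣ p := hrp.dvd_of_dvd_pow h1
      exact (Nat.prime_dvd_prime_iff_eq hrp hp).1 h2
    exact hr ▸ ringChar.charP F
  have hpsi : (fun g : F[X] => phiMap (1 : F) g - g) = PhiAux.psi := rfl
  rw [hpsi]
  constructor
  · intro hker
    exact PhiAux.fwd p n hp hn m hm1 f.natDegree f le_rfl hdeg hf0 hker
  · intro hmem
    clear hdeg hf0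
    induction hmem using Submodule.span_induction with
    | mem x hx =>
      rcases hx with hx | hx
      · obtain ⟨j, hj, i, hi1, hi2, rfl⟩ := hx
        exact PhiAux.gen1_ker p m j i (by omega) hi1
      · obtain ⟨k, hk1, hk2, rfl⟩ := hx
        exact PhiAux.gen2_ker m k hk1 hk2
    | zero => exact PhiAux.psi_iter_zero m
    | add x y hx hy hx' hy' => rw [PhiAux.psi_iter_add, hx', hy', add_zero]
    | smul c x hx hx' => rw [smul_eq_C_mul, PhiAux.psi_iter_C_mul, hx', mul_zero]
end

section
/- Let p be a prime and F the field with p elements, and let 1 ≤ m ≤ p − 2. For every polynomial f ∈ F[x] with deg f ≤ p − 2 and f(0) = 0, one has (φ − id)^m(f) = 0 if and only if deg f ≤ m. (Over the prime field, the m-th generalized eigenspace of φ for eigenvalue 1 consists exactly of the polynomials of degree at most m vanishing at 0, i.e. it is spanned by x, x², …, x^m.) -/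
open Polynomial

section Aux

variable {F : Type*} [Field F]

noncomputable def psiMap (f : F[X]) : F[X] := phiMap 1 f - f

lemma psiMap_def (f : F[X]) : psiMap f = f.comp (X + C 1) - f - C (f.eval 1) := by
  simp only [psiMap, phiMap]; ring

lemma psiMap_add (f g : F[X]) : psiMap (f + g) = psiMap f + psiMap g := by
  simp only [psiMap, phiMap, add_comp, eval_add, C_add]; ring

lemma psiMap_C_mul (c : F) (f : F[X]) : psiMap (C c * f) = C c * psiMap f := by
  simp only [psiMap, phiMap, mul_comp, C_comp, eval_mul, eval_C, C_mul]; ring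

lemma psiMap_eval_zero (f : F[X]) : (psiMap f).eval 0 = - f.eval 0 := by
  simp [psiMap, phiMap, eval_comp]

lemma psiMap_natDegree_le (f : F[X]) : (psiMap f).natDegree ≤ f.natDegree := by
  rw [psiMap_def]
  refine (natDegree_sub_le _ _).trans (max_le ((natDegree_sub_le _ _).trans (max_le ?_ le_rfl)) ?_)
  · rw [natDegree_comp, natDegree_X_add_C, mul_one]
  · simp

lemma psiMap_natDegree_lt (f : F[X]) (hf : 1 ≤ f.natDegree) :
    (psiMap f).natDegree < f.natDegree := by
  have hf0 : f ≠ 0 := fun h => by simp [h] at hf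
  have hc : f.comp (X + C 1) ≠ 0 := fun h => by
    have := natDegree_comp (p := f) (q := X + C (1:F))
    rw [h, natDegree_X_add_C, mul_one, natDegree_zero] at this
    omega
  have hdeg : (f.comp (X + C 1)).degree = f.degree := by
    rw [degree_eq_natDegree hc, degree_eq_natDegree hf0, natDegree_comp,
      natDegree_X_add_C, mul_one]
  have hlead : (f.comp (X + C 1)).leadingCoeff = f.leadingCoeff := by
    rw [leadingCoeff_comp (by rw [natDegree_X_add_C]; norm_num),
      (monic_X_add_C (1:F)).leadingCoeff, one_pow, mul_one]
  have h1 : (f.comp (X + C 1) - f).degree < f.degree := by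
    have := degree_sub_lt hdeg hc hlead
    rwa [hdeg] at this
  have h2 : (psiMap f).degree < f.degree := by
    rw [psiMap_def]
    refine lt_of_le_of_lt (degree_sub_le _ _) (max_lt h1 ?_)
    refine lt_of_le_of_lt degree_C_le ?_
    rw [degree_eq_natDegree hf0]
    exact_mod_cast Nat.lt_of_lt_of_le Nat.zero_lt_one (by exact_mod_cast hf)
  by_cases h : psiMap f = 0
  · rw [h, natDegree_zero]; omega
  · exact natDegree_lt_natDegree h h2

lemma psiMap_X_pow_coeff (n : ℕ) (h2 : 2 ≤ n) :
    (psiMap (X ^ n : F[X])).coeff (n - 1) = (n : F) := by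
  rw [psiMap_def, X_pow_comp]
  rw [coeff_sub, coeff_sub, coeff_X_add_C_pow]
  rw [coeff_X_pow, if_neg (by omega)]
  rw [eval_pow, eval_X, one_pow, coeff_C, if_neg (by omega)]
  rw [one_mul, Nat.choose_symm (by omega), Nat.choose_one_right]
  ring

lemma psiMap_natDegree_eq (f : F[X]) (h2 : 2 ≤ f.natDegree) (hn : (f.natDegree : F) ≠ 0) :
    (psiMap f).natDegree = f.natDegree - 1 := by
  have hf0 : f ≠ 0 := fun h => by simp [h] at h2
  set n := f.natDegree with hn'
  have key : (psiMap f).coeff (n - 1) = f.leadingCoeff * n := by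
    conv_lhs => rw [← eraseLead_add_C_mul_X_pow f]
    rw [psiMap_add, psiMap_C_mul, coeff_add, coeff_C_mul, psiMap_X_pow_coeff n h2]
    have he : (psiMap f.eraseLead).natDegree < n - 1 := by
      by_cases h : 1 ≤ f.eraseLead.natDegree
      · have h1 := psiMap_natDegree_lt f.eraseLead h
        have h3 : f.eraseLead.natDegree ≤ n - 1 := eraseLead_natDegree_le f
        omega
      · have h1 := psiMap_natDegree_le f.eraseLead
        omega
    rw [coeff_eq_zero_of_natDegree_lt he, zero_add]
  have h1 : (psiMap f).natDegree < n := psiMap_natDegree_lt f (by omega)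
  have h2' : n - 1 ≤ (psiMap f).natDegree :=
    le_natDegree_of_ne_zero (by
      rw [key]
      exact mul_ne_zero (leadingCoeff_ne_zero.2 hf0) hn)
  omega

lemma psiMap_eq_zero (f : F[X]) (h1 : f.natDegree ≤ 1) (h0 : f.eval 0 = 0) :
    psiMap f = 0 := by
  have hc0 : f.coeff 0 = 0 := by rwa [coeff_zero_eq_eval_zero]
  have hf : f = C (f.coeff 1) * X := by
    conv_lhs => rw [eq_X_add_C_of_natDegree_le_one h1]
    rw [hc0]; simp
  rw [psiMap_def, hf]
  simp only [mul_comp, C_comp, X_comp, eval_mul, eval_C, eval_X, mul_one, map_one]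
  ring

end Aux

/-- over the prime field `𝔽_p` with `1 ≤ m ≤ p − 2`, a polynomial `f`
with `deg f ≤ p − 2` and `f(0) = 0` satisfies `(φ − id)^m(f) = 0` iff
`deg f ≤ m`. -/
theorem phi_generalized_eigenspace_prime_field (p : ℕ) (hp : p.Prime)
    (m : ℕ) (hm1 : 1 ≤ m) (hm2 : m ≤ p - 2)
    (f : (ZMod p)[X]) (hdeg : f.natDegree ≤ p - 2) (hf0 : f.eval 0 = 0) :
    (fun g : (ZMod p)[X] => phiMap (1 : ZMod p) g - g)^[m] f = 0 ↔
      f.natDegree ≤ m := by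
  haveI : Fact p.Prime := ⟨hp⟩
  have hp2 : 2 ≤ p := hp.two_le
  show psiMap^[m] f = 0 ↔ f.natDegree ≤ m
  have back : ∀ k, 1 ≤ k → ∀ g : (ZMod p)[X], g.natDegree ≤ k → g.eval 0 = 0 →
      psiMap^[k] g = 0 := by
    intro k
    induction k with
    | zero => omega
    | succ j ih =>
      intro _ g hg hg0
      by_cases hj : j = 0
      · subst hj
        simpa using psiMap_eq_zero g (by omega) hg0
      · rw [Function.iterate_succ_apply]
        by_cases hd : g.natDegree ≤ 1
        · rw [psiMap_eq_zero g hd hg0]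
          exact Function.iterate_fixed (psiMap_eq_zero 0 (by simp) (by simp)) j
        · refine ih (by omega) (psiMap g) ?_ ?_
          · have := psiMap_natDegree_lt g (by omega)
            omega
          · rw [psiMap_eval_zero, hg0, neg_zero]
  have fwd : ∀ k, ∀ g : (ZMod p)[X], g.eval 0 = 0 → g.natDegree < p →
      k < g.natDegree → (psiMap^[k] g).natDegree = g.natDegree - k := by
    intro k
    induction k with
    | zero => intro g _ _ _; simp
    | succ j ih =>
      intro g hg0 hgp hjg
      rw [Function.iterate_succ_apply]
      have h2 : 2 ≤ g.natDegree := by omega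
      have hnz : ((g.natDegree : ℕ) : ZMod p) ≠ 0 := by
        rw [Ne, ZMod.natCast_eq_zero_iff]
        intro hdvd
        have := Nat.le_of_dvd (by omega) hdvd
        omega
      have hd := psiMap_natDegree_eq g h2 hnz
      have := ih (psiMap g) (by rw [psiMap_eval_zero, hg0, neg_zero])
        (by omega) (by omega)
      omega
  constructor
  · intro h
    by_contra hlt
    push_neg at hlt
    have := fwd m f hf0 (by omega) hlt
    rw [h, natDegree_zero] at this
    omega
  · intro h
    exact back m hm1 f h hf0
end

section
/- Let p be a prime, n ≥ 2, F a finite field with q = p^n elements, and 1 ≤ k ≤ p − 1. Then the set {f ∈ F[x] : deg f ≤ q − 2, f(0) = 0, and (φ − id)^k(f) = 0} has exactly q^{k·p^{n−1}} elements. (Equivalently, the k-th generalized eigenspace of φ for eigenvalue 1 inside this space has F-dimension k·p^{n−1}.) -/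
open Polynomial

open Finset

section FDiff
variable {X : Type*} [AddGroup X] [One X] {M : Type*} [AddCommGroup M]

/-- forward difference `u(x+1) - u(x)` -/
def fdiff (u : X → M) : X → M := fun x => u (x + 1) - u x

lemma fdiff_zero_fun : fdiff (fun _ : X => (0 : M)) = fun _ => (0 : M) := by
  funext x; simp [fdiff]

lemma fdiff_const (c : M) : fdiff (fun _ : X => c) = fun _ => (0 : M) := by
  funext x; simp [fdiff]

lemma fdiff_iterate_zero_fun (m : ℕ) :
    fdiff^[m] (fun _ : X => (0 : M)) = fun _ => (0 : M) := by
  induction m with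
  | zero => rfl
  | succ m ih => rw [Function.iterate_succ_apply, fdiff_zero_fun, ih]

lemma fdiff_iterate_const (m : ℕ) (hm : 1 ≤ m) (c : M) :
    fdiff^[m] (fun _ : X => c) = fun _ => (0 : M) := by
  obtain ⟨m, rfl⟩ := Nat.exists_eq_add_of_le hm
  rw [add_comm, Function.iterate_add_apply, Function.iterate_one, fdiff_const,
    fdiff_iterate_zero_fun]

end FDiff

section Key

variable {p : ℕ} [Fact p.Prime] {F : Type*} [Field F] [CharP F p]

/-- the key identity: the (p-1)-st difference over `ZMod p` is the full sum. -/
lemma fdiff_iterate_card_sub_one (v : ZMod p → F) (j : ZMod p) :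
    fdiff^[p - 1] v j = ∑ i : ZMod p, v i := by
  letI : Algebra (ZMod p) F := ZMod.algebra F p
  haveI : NeZero p := ⟨(Fact.out : p.Prime).ne_zero⟩
  set s : Module.End (ZMod p) (ZMod p → F) :=
    { toFun := fun v j => v (j + 1), map_add' := fun _ _ => rfl,
      map_smul' := fun _ _ => rfl } with hs
  have s_pow : ∀ (m : ℕ) (v : ZMod p → F) (j : ZMod p), (s ^ m) v j = v (j + (m : ZMod p)) := by
    intro m
    induction m with
    | zero => intro v j; simp
    | succ m ih =>
      intro v j
      rw [pow_succ', Module.End.mul_apply]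
      have h0 : s ((s ^ m) v) j = ((s ^ m) v) (j + 1) := rfl
      rw [h0, ih]
      push_cast
      ring_nf
  have s_sub_one : ∀ (m : ℕ) (v : ZMod p → F), ((s - 1) ^ m) v = fdiff^[m] v := by
    intro m
    induction m with
    | zero => intro v; rfl
    | succ m ih =>
      intro v
      rw [pow_succ', Module.End.mul_apply, ih, Function.iterate_succ_apply']
      funext x
      show s (fdiff^[m] v) x - (fdiff^[m] v) x = _
      rfl
  -- polynomial identity
  have hXne : (X : (ZMod p)[X]) - 1 ≠ 0 := by
    have := Polynomial.X_sub_C_ne_zero (R := ZMod p) 1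
    simpa using this
  have hP : ((X : (ZMod p)[X]) - 1) ^ (p - 1) = ∑ i ∈ range p, X ^ i := by
    apply mul_right_cancel₀ hXne
    rw [← pow_succ, Nat.sub_add_cancel (Fact.out : p.Prime).one_le, geom_sum_mul]
    have h1 : ((X : (ZMod p)[X]) - 1) ^ p = X ^ p - 1 ^ p := sub_pow_char _ _
    simpa using h1
  have hEnd : ((s - 1) ^ (p - 1) : Module.End (ZMod p) (ZMod p → F))
      = ∑ i ∈ range p, s ^ i := by
    have := congrArg (Polynomial.aeval s) hP
    simpa [map_sum] using this
  have h1 : fdiff^[p - 1] v j = ∑ i ∈ range p, v (j + (i : ZMod p)) := by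
    rw [← s_sub_one, hEnd]
    rw [LinearMap.coe_sum, Finset.sum_apply, Finset.sum_apply]
    exact Finset.sum_congr rfl fun i _ => s_pow i v j
  rw [h1]
  have h2 : ∑ i ∈ range p, v (j + (i : ZMod p)) = ∑ x : ZMod p, v (j + x) := by
    rw [← Fin.sum_univ_eq_sum_range (fun i => v (j + (i : ZMod p))) p]
    apply Fintype.sum_bijective (fun i : Fin p => ((i : ℕ) : ZMod p))
    · rw [Fintype.bijective_iff_injective_and_card]
      constructor
      · intro a b hab
        simp only [] at hab
        have : ((a : ℕ) : ZMod p).val = ((b : ℕ) : ZMod p).val := congrArg ZMod.val hab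
        rwa [ZMod.val_cast_of_lt a.2, ZMod.val_cast_of_lt b.2, ← Fin.ext_iff] at this
      · simp [ZMod.card]
    · intro i; rfl
  rw [h2]
  exact Fintype.sum_equiv (Equiv.addLeft j) _ _ (fun x => rfl)

end Key
section Key2
open Finset
variable {p : ℕ} [Fact p.Prime] {F : Type*} [Field F] [CharP F p]

/-- if `fdiff^[k] v` is constant `c` with `k ≤ p-1` then the total sum of `v` is
`c` if `k = p-1` and `0` otherwise. -/
lemma sum_of_fdiff_iterate_const {k : ℕ} (hk : k ≤ p - 1) {v : ZMod p → F} {c : F}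
    (hv : fdiff^[k] v = fun _ => c) :
    ∑ i : ZMod p, v i = if k = p - 1 then c else 0 := by
  have h := fdiff_iterate_card_sub_one v 0
  have hsplit : fdiff^[p - 1] v = fdiff^[p - 1 - k] (fdiff^[k] v) := by
    rw [← Function.iterate_add_apply, Nat.sub_add_cancel hk]
  by_cases hkp : k = p - 1
  · subst hkp
    rw [hv] at h
    rw [if_pos rfl, ← h]
  · have h1 : 1 ≤ p - 1 - k := by omega
    rw [hsplit, hv, fdiff_iterate_const _ h1] at h
    rw [if_neg hkp, ← h]

variable (p) in
/-- discrete antiderivative on `ZMod p` with initial value `a`. -/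
noncomputable def antid (a : F) (v : ZMod p → F) : ZMod p → F :=
  fun j => a + ∑ i ∈ range j.val, v (i : ZMod p)

lemma antid_zero (a : F) (v : ZMod p → F) : antid p a v 0 = a := by
  haveI : NeZero p := ⟨(Fact.out : p.Prime).ne_zero⟩
  simp [antid, ZMod.val_zero]

lemma sum_range_eq_sum_univ (v : ZMod p → F) :
    ∑ i ∈ range p, v (i : ZMod p) = ∑ x : ZMod p, v x := by
  haveI : NeZero p := ⟨(Fact.out : p.Prime).ne_zero⟩
  rw [← Fin.sum_univ_eq_sum_range (fun i => v (i : ZMod p)) p]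
  apply Fintype.sum_bijective (fun i : Fin p => ((i : ℕ) : ZMod p))
  · rw [Fintype.bijective_iff_injective_and_card]
    constructor
    · intro a b hab
      simp only [] at hab
      have : ((a : ℕ) : ZMod p).val = ((b : ℕ) : ZMod p).val := congrArg ZMod.val hab
      rwa [ZMod.val_cast_of_lt a.2, ZMod.val_cast_of_lt b.2, ← Fin.ext_iff] at this
    · simp [ZMod.card]
  · intro i; rfl

lemma fdiff_antid (a : F) {v : ZMod p → F} (hv : ∑ x : ZMod p, v x = 0) :
    fdiff (antid p a v) = v := by
  haveI : NeZero p := ⟨(Fact.out : p.Prime).ne_zero⟩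
  have hple : 1 ≤ p := (Fact.out : p.Prime).one_le
  funext j
  show (a + ∑ i ∈ range (j + 1).val, v (i : ZMod p)) - (a + ∑ i ∈ range j.val, v _) = v j
  have hjv : j = ((j.val : ℕ) : ZMod p) := (ZMod.natCast_rightInverse j).symm
  by_cases h : j.val + 1 < p
  · have hval : (j + 1).val = j.val + 1 := by
      conv_lhs => rw [hjv]
      rw [show ((j.val : ℕ) : ZMod p) + 1 = ((j.val + 1 : ℕ) : ZMod p) by push_cast; ring]
      exact ZMod.val_cast_of_lt h
    rw [hval, Finset.sum_range_succ, ← hjv]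
    ring
  · have hj : j.val = p - 1 := by have := ZMod.val_lt j; omega
    have hval : (j + 1).val = 0 := by
      have h2 : j + 1 = ((j.val + 1 : ℕ) : ZMod p) := by
        conv_lhs => rw [hjv]
        push_cast
        ring
      rw [h2, hj, Nat.sub_add_cancel hple, ZMod.natCast_self, ZMod.val_zero]
    rw [hval]
    simp only [Finset.range_zero, Finset.sum_empty, add_zero]
    have hsum : ∑ i ∈ range ((p-1)+1), v (i : ZMod p) = 0 := by
      rw [Nat.sub_add_cancel hple, sum_range_eq_sum_univ]; exact hv
    rw [Finset.sum_range_succ] at hsum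
    have hneg : v (((p-1 : ℕ) : ZMod p)) = - ∑ i ∈ range (p-1), v (i : ZMod p) := by
      rw [eq_neg_iff_add_eq_zero, add_comm]; exact hsum
    have hj2 : j = ((p - 1 : ℕ) : ZMod p) := by rw [hjv, hj]
    simp only [hj, hj2, hneg]
    rw [ZMod.val_cast_of_lt (show p - 1 < p by omega)]
    ring

lemma antid_fdiff (u : ZMod p → F) : antid p (u 0) (fdiff u) = u := by
  haveI : NeZero p := ⟨(Fact.out : p.Prime).ne_zero⟩
  funext j
  show u 0 + ∑ i ∈ range j.val, (u ((i : ZMod p) + 1) - u (i : ZMod p)) = u j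
  have : ∀ i : ℕ, u ((i : ZMod p) + 1) - u (i : ZMod p)
      = u (((i+1 : ℕ) : ZMod p)) - u ((i : ℕ) : ZMod p) := by
    intro i; push_cast; ring_nf
  rw [Finset.sum_congr rfl (fun i _ => this i), Finset.sum_range_sub (fun i : ℕ => u (i : ZMod p))]
  have hjv : ((j.val : ℕ) : ZMod p) = j := ZMod.natCast_rightInverse j
  rw [hjv]
  push_cast
  ring

/-- CORE counting: number of `u` with `fdiff^[k] u = const c` on `ZMod p`. -/
lemma card_fdiff_iterate_eq_const {k : ℕ} (hk : k ≤ p - 1) (c : F) [Fintype F] :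
    Nat.card {u : ZMod p → F // fdiff^[k] u = fun _ => c}
      = (Fintype.card F) ^ k := by
  induction k with
  | zero =>
    haveI : Unique {u : ZMod p → F // fdiff^[0] u = fun _ => c} :=
      { default := ⟨fun _ => c, rfl⟩
        uniq := fun u => Subtype.ext u.2 }
    simp [Nat.card_unique]
  | succ k ih =>
    have hk' : k ≤ p - 1 := le_trans (Nat.le_succ k) hk
    have hk2 : k ≠ p - 1 := by omega
    have E : {u : ZMod p → F // fdiff^[k+1] u = fun _ => c}
        ≃ F × {v : ZMod p → F // fdiff^[k] v = fun _ => c} :=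
      { toFun := fun u => (u.1 0, ⟨fdiff u.1, by
          rw [← Function.iterate_succ_apply]; exact u.2⟩)
        invFun := fun av => ⟨antid p av.1 av.2.1, by
          have hs : ∑ x : ZMod p, av.2.1 x = 0 := by
            have := sum_of_fdiff_iterate_const hk' av.2.2
            rwa [if_neg hk2] at this
          rw [Function.iterate_succ_apply, fdiff_antid _ hs]
          exact av.2.2⟩
        left_inv := fun u => Subtype.ext (antid_fdiff u.1)
        right_inv := fun av => by
          have hs : ∑ x : ZMod p, av.2.1 x = 0 := by
            have := sum_of_fdiff_iterate_const hk' av.2.2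
            rwa [if_neg hk2] at this
          refine Prod.ext (antid_zero _ _) (Subtype.ext ?_)
          exact fdiff_antid _ hs }
    rw [Nat.card_congr E, Nat.card_prod, ih hk', Nat.card_eq_fintype_card, pow_succ]
    ring

end Key2
section Psi
variable {X : Type*} [AddGroup X] [One X] {M : Type*} [AddCommGroup M]

/-- normalize a function to vanish at 0 -/
def psiN (g : X → M) : X → M := fun x => g x - g 0

/-- the map `T = φ - id` on the function level -/
def tmap (u : X → M) : X → M := fun x => u (x + 1) - u 1 - u x

lemma tmap_psiN (g : X → M) : tmap (psiN g) = psiN (fdiff g) := by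
  funext x
  show (g (x + 1) - g 0) - (g (1 : X) - g 0) - (g x - g 0)
      = (g (x + 1) - g x) - (g (0 + 1) - g 0)
  rw [zero_add]
  abel

lemma tmap_iterate_psiN (m : ℕ) (g : X → M) : tmap^[m] (psiN g) = psiN (fdiff^[m] g) := by
  induction m generalizing g with
  | zero => rfl
  | succ m ih =>
    rw [Function.iterate_succ_apply, tmap_psiN, ih, Function.iterate_succ_apply]

lemma psiN_eq_self {u : X → M} (h : u 0 = 0) : psiN u = u := by
  funext x; show u x - u 0 = u x; rw [h, sub_zero]

lemma psiN_const (c : M) : psiN (fun _ : X => c) = fun _ => (0 : M) := by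
  funext x; show c - c = 0; rw [sub_self]

lemma fdiff_add_const (g : X → M) (a : M) : fdiff (fun x => g x + a) = fdiff g := by
  funext x; show (g (x+1) + a) - (g x + a) = _; rw [fdiff]; abel

lemma fdiff_iterate_add_const {m : ℕ} (hm : 1 ≤ m) (g : X → M) (a : M) :
    fdiff^[m] (fun x => g x + a) = fdiff^[m] g := by
  obtain ⟨m', rfl⟩ := Nat.exists_eq_add_of_le hm
  rw [add_comm, Function.iterate_add_apply, Function.iterate_add_apply,
    Function.iterate_one, fdiff_add_const]

end Psi

section FunSide
open Finset

variable {F : Type*} [Field F] [Fintype F] {p n : ℕ} [Fact p.Prime] [CharP F p]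

lemma funside (hn : 2 ≤ n) (hcard : Fintype.card F = p ^ n)
    {k : ℕ} (hk1 : 1 ≤ k) (hk2 : k ≤ p - 1) :
    Nat.card {u : F → F // u 0 = 0 ∧ tmap^[k] u = 0}
        = (p ^ n) ^ (k * p ^ (n - 1))
      ∧ ∀ u : F → F, u 0 = 0 → tmap^[k] u = 0 → ∑ y : F, u y = 0 := by
  classical
  have hp : p.Prime := Fact.out
  letI : Algebra (ZMod p) F := ZMod.algebra F p
  set L : Submodule (ZMod p) F := Submodule.span (ZMod p) {(1 : F)} with hL
  obtain ⟨K, hK⟩ := Submodule.exists_isCompl L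
  letI : Fintype K := Fintype.ofFinite K
  set e1 : ZMod p ≃ₗ[ZMod p] L :=
    LinearEquiv.toSpanNonzeroSingleton (ZMod p) F 1 one_ne_zero with he1
  set E : K × ZMod p ≃ F :=
    (Equiv.prodCongr (Equiv.refl K) e1.toEquiv).trans
      (Submodule.prodEquivOfIsCompl K L hK.symm).toEquiv with hE
  have hEval : ∀ (t : K) (j : ZMod p), E (t, j) = (t : F) + j • (1 : F) := fun t j => rfl
  have hE1 : ∀ (t : K) (j : ZMod p), E (t, j + 1) = E (t, j) + 1 := by
    intro t j
    rw [hEval, hEval, add_smul, one_smul, add_assoc]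
  -- cardinality of K
  have hcardK : Nat.card K = p ^ (n - 1) := by
    have h1 : Nat.card K * p = p ^ n := by
      have h2 := Nat.card_congr E
      rw [Nat.card_prod, Nat.card_zmod] at h2
      rw [h2, Nat.card_eq_fintype_card, hcard]
    have h3 : p ^ n = p ^ (n - 1) * p := by
      rw [← pow_succ, Nat.sub_add_cancel (by omega)]
    exact Nat.eq_of_mul_eq_mul_right hp.pos (by rw [h1, h3])
  -- orbit compatibility
  have horb : ∀ (g : F → F) (m : ℕ) (t : K) (j : ZMod p),
      fdiff^[m] g (E (t, j)) = fdiff^[m] (fun i => g (E (t, i))) j := by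
    intro g m
    induction m with
    | zero => intro t j; rfl
    | succ m ih =>
      intro t j
      rw [Function.iterate_succ_apply', Function.iterate_succ_apply']
      show fdiff^[m] g (E (t, j) + 1) - fdiff^[m] g (E (t, j)) = _
      rw [← hE1, ih, ih]
      rfl
  -- counting for a fixed constant c
  have hGc : ∀ c : F, Nat.card {g : F → F // fdiff^[k] g = fun _ => c}
      = ((p ^ n) ^ k) ^ (p ^ (n - 1)) := by
    intro c
    have Ec : {g : F → F // fdiff^[k] g = fun _ => c}
        ≃ ∀ t : K, {u : ZMod p → F // fdiff^[k] u = fun _ => c} :=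
      { toFun := fun g t => ⟨fun j => g.1 (E (t, j)), by
          funext j
          rw [← horb g.1 k t j, g.2]⟩
        invFun := fun h => ⟨fun x => (h (E.symm x).1).1 (E.symm x).2, by
          funext x
          have hx : x = E ((E.symm x).1, (E.symm x).2) := by
            rw [Prod.mk.eta, E.apply_symm_apply]
          conv_lhs => rw [hx]
          rw [horb _ k (E.symm x).1 (E.symm x).2]
          have hfun : (fun i => (h (E.symm (E ((E.symm x).1, i))).1).1
              (E.symm (E ((E.symm x).1, i))).2) = (h (E.symm x).1).1 := by
            funext i
            rw [E.symm_apply_apply]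
          rw [hfun, (h (E.symm x).1).2]⟩
        left_inv := fun g => by
          apply Subtype.ext
          funext x
          show g.1 (E ((E.symm x).1, (E.symm x).2)) = g.1 x
          rw [Prod.mk.eta, E.apply_symm_apply]
        right_inv := fun h => by
          funext t
          apply Subtype.ext
          funext j
          show (h (E.symm (E (t, j))).1).1 (E.symm (E (t, j))).2 = (h t).1 j
          rw [E.symm_apply_apply] }
    rw [Nat.card_congr Ec, Nat.card_pi]
    have : ∀ t : K, Nat.card {u : ZMod p → F // fdiff^[k] u = fun _ => c}
        = (p ^ n) ^ k := by
      intro t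
      rw [card_fdiff_iterate_eq_const hk2 c, hcard]
    rw [Finset.prod_congr rfl (fun t _ => this t), Finset.prod_const, Finset.card_univ,
      ← Nat.card_eq_fintype_card, hcardK]
  -- the sigma decomposition of G
  have hG : Nat.card {g : F → F // ∃ c : F, fdiff^[k] g = fun _ => c}
      = p ^ n * ((p ^ n) ^ k) ^ (p ^ (n - 1)) := by
    have ES : {g : F → F // ∃ c : F, fdiff^[k] g = fun _ => c}
        ≃ Σ c : F, {g : F → F // fdiff^[k] g = fun _ => c} :=
      { toFun := fun g => ⟨fdiff^[k] g.1 0, g.1, by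
          obtain ⟨c, hc⟩ := g.2
          rw [hc]⟩
        invFun := fun s => ⟨s.2.1, ⟨s.1, s.2.2⟩⟩
        left_inv := fun g => rfl
        right_inv := fun s => by
          obtain ⟨c, g, hg⟩ := s
          obtain rfl : c = fdiff^[k] g 0 := by rw [hg]
          rfl }
    letI : ∀ c : F, Fintype {g : F → F // fdiff^[k] g = fun _ => c} :=
      fun c => Fintype.ofFinite _
    rw [Nat.card_congr ES, Nat.card_eq_fintype_card, Fintype.card_sigma]
    have : ∀ c : F, Fintype.card {g : F → F // fdiff^[k] g = fun _ => c}
        = ((p ^ n) ^ k) ^ (p ^ (n - 1)) := by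
      intro c
      rw [← Nat.card_eq_fintype_card, hGc c]
    rw [Finset.sum_congr rfl (fun c _ => this c), Finset.sum_const, Finset.card_univ, hcard,
      smul_eq_mul]
  -- the psi bijection
  have EP : {g : F → F // ∃ c : F, fdiff^[k] g = fun _ => c}
      ≃ F × {u : F → F // u 0 = 0 ∧ tmap^[k] u = 0} :=
    { toFun := fun g => (g.1 0, ⟨psiN g.1, by
        constructor
        · show g.1 0 - g.1 0 = 0; rw [sub_self]
        · obtain ⟨c, hc⟩ := g.2
          rw [tmap_iterate_psiN, hc, psiN_const]
          rfl⟩)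
      invFun := fun au => ⟨fun x => au.2.1 x + au.1, by
        refine ⟨fdiff^[k] au.2.1 0, ?_⟩
        rw [fdiff_iterate_add_const hk1]
        have h0 : psiN (fdiff^[k] au.2.1) = 0 := by
          rw [← tmap_iterate_psiN, psiN_eq_self au.2.2.1, au.2.2.2]
        funext x
        have h1 : fdiff^[k] au.2.1 x - fdiff^[k] au.2.1 0 = 0 := congrFun h0 x
        show fdiff^[k] au.2.1 x = fdiff^[k] au.2.1 0
        exact sub_eq_zero.mp h1⟩
      left_inv := fun g => by
        apply Subtype.ext
        funext x
        show (g.1 x - g.1 0) + g.1 0 = g.1 x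
        abel
      right_inv := fun au => by
        refine Prod.ext ?_ (Subtype.ext ?_)
        · show au.2.1 0 + au.1 = au.1
          rw [au.2.2.1, zero_add]
        · funext x
          show (au.2.1 x + au.1) - (au.2.1 0 + au.1) = au.2.1 x
          rw [au.2.2.1]
          abel }
  have hq0 : 0 < p ^ n := pow_pos hp.pos n
  constructor
  · have h4 : p ^ n * Nat.card {u : F → F // u 0 = 0 ∧ tmap^[k] u = 0}
        = p ^ n * ((p ^ n) ^ k) ^ (p ^ (n - 1)) := by
      rw [← hG, Nat.card_congr EP, Nat.card_prod, Nat.card_eq_fintype_card (α := F), hcard]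
    have h5 := Nat.eq_of_mul_eq_mul_left hq0 h4
    rw [h5, ← pow_mul]
  -- the sum-vanishing statement
  · intro u hu0 huk
    have h0 : psiN (fdiff^[k] u) = 0 := by
      rw [← tmap_iterate_psiN, psiN_eq_self hu0, huk]
    have hconst : fdiff^[k] u = fun _ => fdiff^[k] u 0 := by
      funext x
      have h1 : fdiff^[k] u x - fdiff^[k] u 0 = 0 := congrFun h0 x
      show fdiff^[k] u x = fdiff^[k] u 0
      exact sub_eq_zero.mp h1
    set c := fdiff^[k] u 0 with hc
    have hsum1 : ∑ y : F, u y = ∑ z : K × ZMod p, u (E z) :=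
      (Fintype.sum_bijective E E.bijective _ _ (fun z => rfl)).symm
    rw [hsum1, Fintype.sum_prod_type]
    have hinner : ∀ t : K, ∑ j : ZMod p, u (E (t, j)) = if k = p - 1 then c else 0 := by
      intro t
      apply sum_of_fdiff_iterate_const hk2
      funext j
      rw [← horb u k t j, hconst]
    rw [Finset.sum_congr rfl (fun t _ => hinner t), Finset.sum_const]
    rw [Finset.card_univ]
    have hcK : Fintype.card K = p ^ (n - 1) := by
      rw [← Nat.card_eq_fintype_card]; exact hcardK
    have hp0 : ((p : F)) = 0 := CharP.cast_eq_zero F p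
    have hcast : ((p ^ (n-1) : ℕ) : F) = 0 := by
      push_cast
      rw [hp0]
      exact zero_pow (by omega)
    rw [hcK, nsmul_eq_mul, hcast, zero_mul]

end FunSide
section PolySide
open Finset

variable {R : Type*} [CommRing R]

lemma evalfun_tp (f : R[X]) :
    (fun y => (phiMap (1 : R) f - f).eval y) = tmap (fun y => f.eval y) := by
  funext x
  simp only [phiMap, tmap, eval_sub, eval_comp, eval_add, eval_X, eval_C]

lemma evalfun_tp_iter (k : ℕ) (f : R[X]) :
    (fun y => (((fun g : R[X] => phiMap (1 : R) g - g)^[k]) f).eval y)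
      = tmap^[k] (fun y => f.eval y) := by
  induction k generalizing f with
  | zero => rfl
  | succ k ih =>
    rw [Function.iterate_succ_apply, Function.iterate_succ_apply, ← evalfun_tp, ih]

variable [Nontrivial R]

lemma tp_natDegree_le (f : R[X]) : (phiMap (1 : R) f - f).natDegree ≤ f.natDegree := by
  have h1 : (f.comp (X + C 1)).natDegree ≤ f.natDegree := by
    refine le_trans (natDegree_comp_le) ?_
    rw [natDegree_X_add_C, mul_one]
  show ((f.comp (X + C 1) - C (f.eval 1)) - f).natDegree ≤ f.natDegree
  refine le_trans (natDegree_sub_le _ _) (max_le ?_ le_rfl)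
  refine le_trans (natDegree_sub_le _ _) (max_le h1 ?_)
  simp [natDegree_C]

lemma tp_iter_natDegree_le (k : ℕ) (f : R[X]) :
    (((fun g : R[X] => phiMap (1 : R) g - g)^[k]) f).natDegree ≤ f.natDegree := by
  induction k generalizing f with
  | zero => exact le_rfl
  | succ k ih =>
    rw [Function.iterate_succ_apply]
    exact le_trans (ih _) (tp_natDegree_le f)

end PolySide

section EvalEquiv
open Finset

variable {F : Type*} [Field F] [Fintype F]

lemma sum_eval_eq_zero {f : F[X]} (hdeg : f.natDegree ≤ Fintype.card F - 2)
    (hq4 : 4 ≤ Fintype.card F) : ∑ y : F, f.eval y = 0 := by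
  have h2 : ∑ y : F, f.eval y = ∑ i ∈ range (f.natDegree + 1), f.coeff i * ∑ y : F, y ^ i := by
    calc ∑ y : F, f.eval y
        = ∑ y : F, ∑ i ∈ range (f.natDegree + 1), f.coeff i * y ^ i :=
          Finset.sum_congr rfl fun y _ => eval_eq_sum_range y
      _ = ∑ i ∈ range (f.natDegree + 1), ∑ y : F, f.coeff i * y ^ i := Finset.sum_comm
      _ = ∑ i ∈ range (f.natDegree + 1), f.coeff i * ∑ y : F, y ^ i :=
          Finset.sum_congr rfl fun i _ => (Finset.mul_sum _ _ _).symm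
  rw [h2]
  apply Finset.sum_eq_zero
  intro i hi
  rw [FiniteField.sum_pow_lt_card_sub_one (K := F) i ?_, mul_zero]
  have := Finset.mem_range.mp hi
  omega

lemma exists_evalEquiv (hq4 : 4 ≤ Fintype.card F) :
    ∃ EvE : {f : F[X] // f.natDegree ≤ Fintype.card F - 2}
        ≃ {u : F → F // ∑ y : F, u y = 0},
      ∀ f, (EvE f).1 = fun y => f.1.eval y := by
  classical
  set q := Fintype.card F with hq
  -- the evaluation map
  set Emap : {f : F[X] // f.natDegree ≤ q - 2} → {u : F → F // ∑ y : F, u y = 0} :=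
    fun f => ⟨fun y => f.1.eval y, sum_eval_eq_zero f.2 hq4⟩ with hEmap
  -- injectivity
  have hinj : Function.Injective Emap := by
    intro a b hab
    apply Subtype.ext
    have hev : ∀ y : F, (a.1 - b.1).eval y = 0 := by
      intro y
      have := congrFun (congrArg Subtype.val hab) y
      simp only [hEmap] at this
      rw [eval_sub, this, sub_self]
    have hz : a.1 - b.1 = 0 := by
      apply Polynomial.eq_zero_of_natDegree_lt_card_of_eval_eq_zero (a.1 - b.1)
        (Function.injective_id) (fun y => hev y)
      have hd : (a.1 - b.1).natDegree ≤ q - 2 :=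
        le_trans (natDegree_sub_le _ _) (max_le a.2 b.2)
      omega
    exact sub_eq_zero.mp hz
  -- equiv to `Fin (q-1) → F` for the source
  have hiff : ∀ f : F[X], f.natDegree ≤ q - 2 ↔ f ∈ degreeLT F (q - 1) := by
    intro f
    rw [mem_degreeLT]
    by_cases hf : f = 0
    · subst hf
      simp only [natDegree_zero, degree_zero]
      constructor
      · intro _; exact WithBot.bot_lt_coe _
      · intro _; omega
    · rw [← natDegree_lt_iff_degree_lt hf]
      omega
  have E1 : {f : F[X] // f.natDegree ≤ q - 2} ≃ (Fin (q - 1) → F) :=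
    (Equiv.subtypeEquivRight hiff).trans (Polynomial.degreeLTEquiv F (q - 1)).toEquiv
  -- equiv to functions on nonzero elements for the target
  have hsplitsum : ∀ v : F → F, ∑ y : F, v y = v 0 + ∑ z : {y : F // y ≠ (0:F)}, v z.1 := by
    intro v
    rw [Finset.sum_eq_add_sum_sdiff_singleton_of_mem (Finset.mem_univ (0 : F)) v]
    congr 1
    exact Finset.sum_subtype (Finset.univ \ {(0:F)}) (fun y => by simp) v
  have E2 : {u : F → F // ∑ y : F, u y = 0} ≃ ({y : F // y ≠ (0:F)} → F) :=
    { toFun := fun u y => u.1 y.1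
      invFun := fun w => ⟨fun y =>
          if h : y = 0 then - ∑ z : {y : F // y ≠ (0:F)}, w z else w ⟨y, h⟩, by
        rw [hsplitsum, dif_pos rfl]
        have h3 : ∀ z : {y : F // y ≠ (0:F)},
            (if h : z.1 = 0 then - ∑ z : {y : F // y ≠ (0:F)}, w z else w ⟨z.1, h⟩) = w z := by
          intro z
          rw [dif_neg z.2]
        rw [Finset.sum_congr rfl (fun z _ => h3 z)]
        ring⟩
      left_inv := fun u => by
        apply Subtype.ext
        funext y
        show (if h : y = 0 then - ∑ z : {y : F // y ≠ (0:F)}, u.1 z.1 else u.1 y) = u.1 y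
        by_cases h : y = 0
        · subst h
          rw [dif_pos rfl]
          have h2 := u.2
          rw [hsplitsum u.1] at h2
          exact neg_eq_of_add_eq_zero_left h2
        · rw [dif_neg h]
      right_inv := fun w => by
        funext y
        show (if h : y.1 = 0 then - ∑ z : {y : F // y ≠ (0:F)}, w z else w ⟨y.1, h⟩) = w y
        rw [dif_neg y.2] }
  -- cardinalities
  have c1 : Nat.card {f : F[X] // f.natDegree ≤ q - 2} = q ^ (q - 1) := by
    rw [Nat.card_congr E1, Nat.card_fun, Nat.card_eq_fintype_card (α := F),
      Nat.card_eq_fintype_card (α := Fin (q-1)), Fintype.card_fin]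
  have c2 : Nat.card {u : F → F // ∑ y : F, u y = 0} = q ^ (q - 1) := by
    rw [Nat.card_congr E2, Nat.card_fun, Nat.card_eq_fintype_card (α := F),
      Nat.card_eq_fintype_card (α := {y : F // y ≠ (0:F)})]
    congr 1
    have := Fintype.card_subtype_compl (fun y : F => y = 0)
    rw [Fintype.card_subtype_eq (0 : F)] at this
    exact this
  -- bijectivity via cardinality
  letI : Fintype {f : F[X] // f.natDegree ≤ q - 2} := Fintype.ofEquiv _ E1.symm
  have hbij : Function.Bijective Emap := by
    rw [Fintype.bijective_iff_injective_and_card]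
    refine ⟨hinj, ?_⟩
    rw [← Nat.card_eq_fintype_card, ← Nat.card_eq_fintype_card, c1, c2]
  exact ⟨Equiv.ofBijective Emap hbij, fun f => rfl⟩

end EvalEquiv

/-- over `F = 𝔽_{p^n}` with `n ≥ 2` and `1 ≤ k ≤ p − 1`, the set of
polynomials `f` with `deg f ≤ q − 2`, `f(0) = 0` and `(φ − id)^k(f) = 0` has
exactly `q^(k·p^(n−1))` elements, i.e. this generalized eigenspace has
`F`-dimension `k·p^(n−1)`. -/
theorem phi_generalized_eigenspace_card {F : Type*} [Field F] [Fintype F]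
    (p n : ℕ) (hp : p.Prime) (hn : 2 ≤ n) (hcard : Fintype.card F = p ^ n)
    (k : ℕ) (hk1 : 1 ≤ k) (hk2 : k ≤ p - 1) :
    Nat.card {f : F[X] // f.natDegree ≤ p ^ n - 2 ∧ f.eval 0 = 0 ∧
        (fun g : F[X] => phiMap (1 : F) g - g)^[k] f = 0} =
      (p ^ n) ^ (k * p ^ (n - 1)) := by
  classical
  haveI hfact : Fact p.Prime := ⟨hp⟩
  have hp0F : (p : F) = 0 := by
    have h1 : ((Fintype.card F : ℕ) : F) = 0 := Nat.cast_card_eq_zero F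
    rw [hcard] at h1
    push_cast at h1
    exact (pow_eq_zero_iff (by omega)).mp h1
  haveI : CharP F p := (CharP.charP_iff_prime_eq_zero hp).mpr hp0F
  have hq4 : 4 ≤ Fintype.card F := by
    rw [hcard]
    calc 4 = 2 ^ 2 := rfl
      _ ≤ p ^ 2 := Nat.pow_le_pow_left hp.two_le 2
      _ ≤ p ^ n := Nat.pow_le_pow_right hp.pos hn
  obtain ⟨hcount, hsum⟩ := funside (F := F) (p := p) (n := n) hn hcard hk1 hk2
  obtain ⟨EvE, hEvE⟩ := exists_evalEquiv (F := F) hq4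
  have hq2 : p ^ n - 2 = Fintype.card F - 2 := by rw [hcard]
  have hsymm : ∀ (g : F[X]) (hd : g.natDegree ≤ Fintype.card F - 2)
      (pf : ∑ y : F, (fun y => g.eval y) y = 0),
      EvE.symm ⟨fun y => g.eval y, pf⟩ = ⟨g, hd⟩ := by
    intro g hd pf
    rw [Equiv.symm_apply_eq]
    apply Subtype.ext
    rw [hEvE]
  have SE : {f : F[X] // f.natDegree ≤ p ^ n - 2 ∧ f.eval 0 = 0 ∧
        (fun g : F[X] => phiMap (1 : F) g - g)^[k] f = 0}
      ≃ {u : F → F // u 0 = 0 ∧ tmap^[k] u = 0} :=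
    { toFun := fun f => ⟨fun y => f.1.eval y, f.2.2.1, by
        rw [← evalfun_tp_iter k f.1, f.2.2.2]
        funext y
        exact eval_zero⟩
      invFun := fun u => ⟨(EvE.symm ⟨u.1, hsum u.1 u.2.1 u.2.2⟩).1, by
        set f0 := EvE.symm ⟨u.1, hsum u.1 u.2.1 u.2.2⟩ with hf0
        have hval : (fun y => f0.1.eval y) = u.1 := by
          rw [← hEvE f0, hf0, Equiv.apply_symm_apply]
        refine ⟨by rw [hq2]; exact f0.2, ?_, ?_⟩
        · have h7 := congrFun hval 0
          simp only [u.2.1] at h7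
          exact h7
        · apply Polynomial.eq_zero_of_natDegree_lt_card_of_eval_eq_zero _
            (Function.injective_id (α := F))
          · intro y
            have h5 := evalfun_tp_iter k f0.1
            rw [hval, u.2.2] at h5
            exact congrFun h5 y
          · have hd1 : (((fun g : F[X] => phiMap (1 : F) g - g)^[k]) f0.1).natDegree
                ≤ f0.1.natDegree := tp_iter_natDegree_le k f0.1
            exact lt_of_le_of_lt (hd1.trans f0.2)
              (Nat.sub_lt (lt_of_lt_of_le (by norm_num) hq4) (by norm_num))⟩
      left_inv := fun f => by
        have hd : f.1.natDegree ≤ Fintype.card F - 2 := by rw [← hq2]; exact f.2.1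
        have h8 := hsymm f.1 hd (hsum _ f.2.2.1 (by
          rw [← evalfun_tp_iter k f.1, f.2.2.2]
          funext y
          exact eval_zero))
        apply Subtype.ext
        show (EvE.symm ⟨(fun y => f.1.eval y), _⟩).1 = f.1
        rw [h8]
      right_inv := fun u => by
        apply Subtype.ext
        show (fun y => (EvE.symm ⟨u.1, hsum u.1 u.2.1 u.2.2⟩).1.eval y) = u.1
        rw [← hEvE, Equiv.apply_symm_apply] }
  rw [Nat.card_congr SE, hcount]
end

section
/- Let F be a field of prime characteristic p, let r ∈ F, let i be a natural number not divisible by p, and let k be a natural number. Then for every polynomial f ∈ F[x] with f(0) = 0, one has (φ_r − id)^k(f) = 0 if and only if (φ_{(i:F)·r} − id)^k(f) = 0, where (i : F) denotes the natural number i cast into F. (The generalized eigenspaces of φ_r and φ_{i·r} coincide for every i ∈ 𝔽_p^*.) -/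
open Polynomial

namespace PhiAux

variable {F : Type*} [Field F]

/-- `phiMap` as a linear map. -/
noncomputable def phiL (r : F) : F[X] →ₗ[F] F[X] where
  toFun f := phiMap r f
  map_add' a b := by simp [phiMap, add_comp]; ring
  map_smul' c f := by
    simp only [phiMap, smul_eq_C_mul, mul_comp, C_comp, eval_mul, eval_C, C_mul,
      RingHom.id_apply]
    ring

/-- Polynomials vanishing at `0`. -/
def V (F : Type*) [Field F] : Submodule F F[X] where
  carrier := {f | f.eval 0 = 0}
  add_mem' := by intro a b ha hb; simp_all [Set.mem_setOf_eq]
  zero_mem' := by simp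
  smul_mem' := by intro c f hf; simp_all [Set.mem_setOf_eq]

lemma phiL_mem (r : F) (f : F[X]) : phiL r f ∈ V F := by
  show (phiMap r f).eval 0 = 0
  simp [phiMap, eval_comp]

/-- The restriction of `phiL r` to `V F`. -/
noncomputable def A (r : F) : Module.End F (V F) :=
  (phiL r).restrict (fun x _ => phiL_mem r x)

@[simp] lemma coe_A (r : F) (x : V F) : (A r x : F[X]) = phiMap r (x : F[X]) := rfl

lemma phiMap_phiMap (r s : F) (f : F[X]) :
    phiMap r (phiMap s f) = phiMap (r + s) f := by
  simp only [phiMap, sub_comp, comp_assoc, add_comp, X_comp, C_comp, eval_sub,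
    eval_comp, eval_add, eval_X, eval_C, C_add, C_sub]
  ring_nf

lemma A_mul (r s : F) : A r * A s = A (r + s) :=
  LinearMap.ext fun x => Subtype.ext (phiMap_phiMap r s x)

lemma A_zero : A (0 : F) = 1 := by
  refine LinearMap.ext fun x => Subtype.ext ?_
  have hx : (x : F[X]).eval 0 = 0 := x.2
  show phiMap 0 (x : F[X]) = (x : F[X])
  simp [phiMap, hx]

lemma A_pow (r : F) (n : ℕ) : A r ^ n = A ((n : F) * r) := by
  induction n with
  | zero => simp [A_zero]
  | succ n ih =>
      rw [pow_succ, ih, A_mul]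
      congr 1
      push_cast
      ring

lemma iterate_eq (r : F) (k : ℕ) (x : V F) :
    (fun g : F[X] => phiMap r g - g)^[k] (x : F[X]) = (((A r - 1) ^ k) x : F[X]) := by
  induction k with
  | zero => simp
  | succ k ih =>
      rw [Function.iterate_succ_apply', ih, pow_succ', Module.End.mul_apply,
        LinearMap.sub_apply, Module.End.one_apply, Submodule.coe_sub, coe_A]

lemma key (p : ℕ) (hp : p.Prime) [CharP F p] (r : F) (i : ℕ) (hi : ¬ p ∣ i) (k : ℕ)
    (x : V F) :
    ((A r - 1) ^ k) x = 0 ↔ ((A ((i : F) * r) - 1) ^ k) x = 0 := by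
  haveI := Fact.mk hp
  haveI : Nontrivial (V F) := by
    refine ⟨⟨X, by simp [V]⟩, 0, ?_⟩
    intro h
    exact X_ne_zero (congrArg Subtype.val h)
  haveI : CharP (Module.End F (V F)) p :=
    charP_of_injective_algebraMap (algebraMap F (Module.End F (V F))).injective p
  set N : Module.End F (V F) := A r - 1 with hNdef
  have hN : N ^ p = 0 := by
    rw [hNdef, sub_pow_char_of_commute (x := A r) (y := 1) p (Commute.one_right _), one_pow, A_pow,
      CharP.cast_eq_zero, zero_mul, A_zero, sub_self]
  have hNnil : IsNilpotent N := ⟨p, hN⟩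
  -- the polynomial q = (1+X)^i - 1
  set q : F[X] := (1 + X) ^ i - 1 with hqdef
  have hM : A ((i : F) * r) - 1 = aeval N q := by
    have h1 : (1 : Module.End F (V F)) + (A r - 1) = A r := by abel
    rw [hqdef, map_sub, map_pow, map_add, map_one, aeval_X, hNdef, h1, A_pow]
  have hq0 : q.coeff 0 = 0 := by
    simp [hqdef, coeff_sub, coeff_one_add_X_pow]
  obtain ⟨u, hu⟩ : (X : F[X]) ∣ q := X_dvd_iff.mpr hq0
  have hu0 : u.coeff 0 = (i : F) := by
    have h1 : q.coeff 1 = (i : F) := by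
      simp [hqdef, coeff_sub, coeff_one_add_X_pow, coeff_one]
    have h2 : q.coeff 1 = u.coeff 0 := by
      rw [hu]
      exact coeff_X_mul u 0
    rw [← h1, h2]
  set U : Module.End F (V F) := aeval N u with hUdef
  have hNU : Commute N U := by
    have := (Commute.all (X : F[X]) u).map (aeval N : F[X] →ₐ[F] Module.End F (V F))
    simpa [aeval_X] using this
  have hMNU : A ((i : F) * r) - 1 = N * U := by
    rw [hM, hu, map_mul, aeval_X]
  -- U is a unit
  have hUunit : IsUnit U := by
    obtain ⟨w, hw⟩ : (X : F[X]) ∣ (u - C (i : F)) := by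
      rw [X_dvd_iff]
      simp [hu0]
    have hu' : u = C (i : F) + X * w := by rw [← hw]; ring
    have hUeq : U = algebraMap F (Module.End F (V F)) (i : F) + N * aeval N w := by
      rw [hUdef, hu', map_add, aeval_C, map_mul, aeval_X]
    rw [hUeq]
    have hnil : IsNilpotent (N * aeval N w) := by
      refine Commute.isNilpotent_mul_right ?_ hNnil
      have := (Commute.all (X : F[X]) w).map (aeval N : F[X] →ₐ[F] Module.End F (V F))
      simpa [aeval_X] using this
    have hiF : (i : F) ≠ 0 := by
      rw [Ne, CharP.cast_eq_zero_iff F p i]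
      exact hi
    have hun : IsUnit (algebraMap F (Module.End F (V F)) (i : F)) :=
      (isUnit_iff_ne_zero.mpr hiF).map (algebraMap F (Module.End F (V F)))
    have hcomm : Commute (N * aeval N w) (algebraMap F (Module.End F (V F)) (i : F)) :=
      Algebra.commute_algebraMap_right _ _
    exact IsNilpotent.isUnit_add_left_of_commute (R := Module.End F (V F)) hnil hun hcomm
  have e1 : (A ((i : F) * r) - 1) ^ k = U ^ k * N ^ k := by
    rw [hMNU, hNU.eq, hNU.symm.mul_pow]
  rw [e1]
  have hinj : Function.Injective (U ^ k : Module.End F (V F)) :=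
    ((Module.End.isUnit_iff _).mp (hUunit.pow k)).injective
  constructor
  · intro h
    rw [Module.End.mul_apply, h, map_zero]
  · intro h
    rw [Module.End.mul_apply] at h
    apply hinj
    rw [map_zero]
    exact h

end PhiAux

/-- over a field of prime characteristic `p`, for `i` not divisible
by `p`, a polynomial `f` with `f(0) = 0` satisfies `(φ_r − id)^k(f) = 0` iff
`(φ_{i·r} − id)^k(f) = 0`: the generalized eigenspaces of `φ_r` and `φ_{i·r}`
coincide. -/
theorem phi_r_same_generalized_eigenspace {F : Type*} [Field F] (p : ℕ)
    (hp : p.Prime) [CharP F p] (r : F) (i : ℕ) (hi : ¬ p ∣ i) (k : ℕ)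
    (f : F[X]) (hf0 : f.eval 0 = 0) :
    (fun g : F[X] => phiMap r g - g)^[k] f = 0 ↔
      (fun g : F[X] => phiMap ((i : F) * r) g - g)^[k] f = 0 := by
  open PhiAux in
  have hfV : f ∈ V F := hf0
  have h1 := PhiAux.iterate_eq r k ⟨f, hfV⟩
  have h2 := PhiAux.iterate_eq ((i : F) * r) k ⟨f, hfV⟩
  rw [show ((⟨f, hfV⟩ : V F) : F[X]) = f from rfl] at h1 h2
  rw [h1, h2, ZeroMemClass.coe_eq_zero, ZeroMemClass.coe_eq_zero]
  exact PhiAux.key p hp r i hi k ⟨f, hfV⟩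
end

section
/- Let p be a prime, n ≥ 1, F a finite field with q = p^n elements, and let a ∈ F be such that 1, a, a², …, a^{n−1} are linearly independent over the prime field 𝔽_p. For every polynomial f ∈ F[x] with deg f ≤ q − 2 and f(0) = 0, one has φ_{a^i}(f) = f for all 0 ≤ i ≤ n−1 if and only if f lies in the F-linear span of the monomials {x^{p^k} : 0 ≤ k ≤ n−1} (i.e. f is a linearized polynomial). In particular this common eigenspace has F-dimension n. -/
open Polynomial
open Finset

lemma phiMap_fixed_iff {R : Type*} [CommRing R] (r : R) (f : R[X]) :
    phiMap r f = f ↔ f.comp (X + C r) = f + C (f.eval r) := by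
  unfold phiMap; exact sub_eq_iff_eq_add

/-- Every element of the span of the `X ^ p ^ k` is fixed by every `phiMap r`. -/
lemma phiMap_fixed_of_mem_span {F : Type*} [Field F] {p : ℕ} (hp : p.Prime) [CharP F p]
    (r : F) {s : Set F[X]} (hs : ∀ g ∈ s, ∃ k : ℕ, g = X ^ p ^ k)
    {f : F[X]} (hf : f ∈ Submodule.span F s) : phiMap r f = f := by
  haveI : Fact p.Prime := ⟨hp⟩
  haveI : CharP F[X] p := Polynomial.instCharP p
  haveI : ExpChar F[X] p := .prime hp
  let N : Submodule F F[X] :=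
    { carrier := {f | phiMap r f = f}
      zero_mem' := by simp [phiMap]
      add_mem' := by
        intro x y hx hy
        simp only [Set.mem_setOf_eq, phiMap, add_comp, eval_add, C_add] at *
        linear_combination hx + hy
      smul_mem' := by
        intro c x hx
        simp only [Set.mem_setOf_eq, phiMap, smul_eq_C_mul, mul_comp, C_comp,
          eval_mul, eval_C, C_mul] at *
        linear_combination C c * hx }
  have : Submodule.span F s ≤ N := by
    rw [Submodule.span_le]
    intro g hg
    obtain ⟨k, rfl⟩ := hs g hg
    show phiMap r (X ^ p ^ k) = X ^ p ^ k
    rw [phiMap, X_pow_comp, add_pow_char_pow, eval_pow, eval_X, ← C_pow]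
    ring
  exact this hf

/-- Coefficient relation extracted from additivity. -/
lemma coeff_mul_choose_eq_zero {F : Type*} [Field F] [Fintype F] {f : F[X]}
    (hdeg : f.natDegree < Fintype.card F)
    (Hadd : ∀ c : F, f.comp (X + C c) = f + C (f.eval c))
    {j m : ℕ} (hj : 1 ≤ j) (hjm : j < m) : f.coeff m * (m.choose j : F) = 0 := by
  by_cases hms : m ∈ f.support
  · set g : F[X] := (∑ m' ∈ f.support, C (f.coeff m' * (m'.choose j : F)) * X ^ (m' - j))
      - C (f.coeff j) with hgdef
    have heval : ∀ c : F, g.eval c = 0 := by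
      intro c
      have h1 : (f.comp (X + C c)).coeff j = f.coeff j := by
        rw [Hadd c, coeff_add, coeff_C, if_neg (by omega), add_zero]
      have h2 : (f.comp (X + C c)).coeff j
          = ∑ m' ∈ f.support, f.coeff m' * (c ^ (m' - j) * (m'.choose j : F)) := by
        rw [comp_eq_sum_left, Polynomial.sum_def, finset_sum_coeff]
        refine Finset.sum_congr rfl fun m' _ => ?_
        rw [coeff_C_mul, coeff_X_add_C_pow]
      rw [hgdef]
      simp only [eval_sub, eval_finset_sum, eval_mul, eval_C, eval_pow, eval_X]
      rw [← h1, h2]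
      rw [Finset.sum_congr rfl (fun m' _ => by ring : ∀ m' ∈ f.support,
        f.coeff m' * (m'.choose j : F) * c ^ (m' - j)
          = f.coeff m' * (c ^ (m' - j) * (m'.choose j : F)))]
      ring
    have hdegg : g.natDegree < Fintype.card F := by
      have h1 : (∑ m' ∈ f.support, C (f.coeff m' * (m'.choose j : F)) * X ^ (m' - j)).natDegree
          ≤ f.natDegree := by
        apply natDegree_sum_le_of_forall_le
        intro m' hm'
        refine (natDegree_C_mul_le _ _).trans ?_
        rw [natDegree_X_pow]
        exact (Nat.sub_le _ _).trans (le_natDegree_of_mem_supp _ hm')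
      refine lt_of_le_of_lt ?_ hdeg
      refine (natDegree_sub_le _ _).trans ?_
      exact max_le h1 ((natDegree_C _).le.trans (Nat.zero_le _))
    have hg0 : g = 0 :=
      Polynomial.eq_zero_of_natDegree_lt_card_of_eval_eq_zero g Function.injective_id
        (fun c => heval c) hdegg
    have hsum : (∑ m' ∈ f.support, C (f.coeff m' * (m'.choose j : F)) * X ^ (m' - j)).coeff (m - j)
        = f.coeff m * (m.choose j : F) := by
      rw [finset_sum_coeff]
      rw [Finset.sum_eq_single m (fun m' _ hne => ?_) (fun h => absurd hms h)]
      · rw [coeff_C_mul, coeff_X_pow, if_pos rfl, mul_one]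
      · rw [coeff_C_mul, coeff_X_pow]
        rcases le_or_gt m' j with h | h
        · rw [if_neg (by omega), mul_zero]
        · rw [if_neg (by omega), mul_zero]
    have hz : g.coeff (m - j) = 0 := by rw [hg0, coeff_zero]
    rw [hgdef, coeff_sub, hsum, coeff_C, if_neg (by omega : ¬ m - j = 0), sub_zero] at hz
    exact hz
  · rw [notMem_support_iff.mp hms, zero_mul]

/-- Converse-Lucas: if `p` divides all middle binomial coefficients of `m`, then `m` is a
power of `p`. -/
lemma eq_pow_of_dvd_choose {p : ℕ} (hp : p.Prime) {m : ℕ} (hm : m ≠ 0)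
    (h : ∀ j, 0 < j → j < m → p ∣ m.choose j) : ∃ k, m = p ^ k := by
  haveI : Fact p.Prime := ⟨hp⟩
  set k := m.factorization p with hkdef
  have hmu : m = p ^ k * (m / p ^ k) := (Nat.ordProj_mul_ordCompl_eq_self m p).symm
  set u := m / p ^ k with hudef
  have hpu : ¬ p ∣ u := Nat.not_dvd_ordCompl hp hm
  have hu0 : u ≠ 0 := by rintro h0; rw [h0, mul_zero] at hmu; exact hm hmu
  rcases eq_or_lt_of_le (Nat.one_le_iff_ne_zero.mpr hu0) with h1 | h2
  · exact ⟨k, by rw [hmu, ← h1, mul_one]⟩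
  · exfalso
    have hppos : 0 < p ^ k := pow_pos hp.pos k
    have hjlt : p ^ k < m := by
      calc p ^ k = p ^ k * 1 := (mul_one _).symm
        _ < p ^ k * u := by exact Nat.mul_lt_mul_of_pos_left h2 hppos
        _ = m := hmu.symm
    have hdvd := h (p ^ k) hppos hjlt
    have H : m.choose (p ^ k) ≡ (m / p ^ k).choose (p ^ k / p ^ k) *
        ∏ i ∈ range k, (m / p ^ i % p).choose (p ^ k / p ^ i % p) [MOD p] := by
      rw [← Int.natCast_modEq_iff]
      exact_mod_cast Choose.choose_modEq_choose_mul_prod_range_choose (p := p) (n := m)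
        (k := p ^ k) k
    have e2 : p ^ k / p ^ k = 1 := Nat.div_self hppos
    have e3 : ∏ i ∈ range k, (m / p ^ i % p).choose (p ^ k / p ^ i % p) = 1 := by
      apply Finset.prod_eq_one
      intro i hi
      have hik : i < k := Finset.mem_range.mp hi
      have : p ^ k / p ^ i % p = 0 := by
        rw [Nat.pow_div hik.le hp.pos]
        exact Nat.mod_eq_zero_of_dvd (dvd_pow_self p (Nat.sub_ne_zero_of_lt hik))
      rw [this, Nat.choose_zero_right]
    rw [e2, e3, ← hudef, Nat.choose_one_right, mul_one] at H
    have : p ∣ u := Nat.modEq_zero_iff_dvd.mp (H.symm.trans (Nat.modEq_zero_iff_dvd.mpr hdvd))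
    exact hpu this

/-- over `F = 𝔽_{p^n}`, if `1, a, a², …, a^(n−1)` are linearly
independent over `𝔽_p`, then a polynomial `f` with `deg f ≤ q − 2` and
`f(0) = 0` is fixed by all the maps `φ_{a^i}` (`0 ≤ i ≤ n−1`) iff it lies in the
span of the monomials `x^(p^k)` (`0 ≤ k ≤ n−1`), i.e. `f` is a linearized
polynomial; in particular this common eigenspace has `F`-dimension `n`. -/
theorem common_eigenspace_linearized {F : Type*} [Field F] [Fintype F]
    (p n : ℕ) (hp : p.Prime) (hn : 1 ≤ n) (hcard : Fintype.card F = p ^ n)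
    [CharP F p] (a : F)
    (ha : letI : Algebra (ZMod p) F := ZMod.algebra F p
          LinearIndependent (ZMod p) (fun i : Fin n => a ^ (i : ℕ))) :
    (∀ f : F[X], f.natDegree ≤ p ^ n - 2 → f.eval 0 = 0 →
      ((∀ i : ℕ, i ≤ n - 1 → phiMap (a ^ i) f = f) ↔
        f ∈ Submodule.span F {g : F[X] | ∃ k ≤ n - 1, g = X ^ p ^ k})) ∧
    Module.finrank F
      (Submodule.span F {g : F[X] | ∃ k ≤ n - 1, g = X ^ p ^ k}) = n := by
  letI : Algebra (ZMod p) F := ZMod.algebra F p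
  have ha' : LinearIndependent (ZMod p) (fun i : Fin n => a ^ (i : ℕ)) := ha
  haveI : Fact p.Prime := ⟨hp⟩
  haveI : NeZero p := ⟨hp.ne_zero⟩
  have hq2 : 2 ≤ p ^ n := le_trans hp.two_le (Nat.le_self_pow (by omega) p)
  have hsetdef : ∀ g ∈ {g : F[X] | ∃ k ≤ n - 1, g = X ^ p ^ k}, ∃ k : ℕ, g = X ^ p ^ k := by
    rintro g ⟨k, _, rfl⟩; exact ⟨k, rfl⟩
  constructor
  · intro f hdeg hf0
    constructor
    · intro hfix
      -- Step A: full additivity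
      have hadd : ∀ c d : F, f.comp (X + C c) = f + C (f.eval c) →
          f.comp (X + C d) = f + C (f.eval d) →
          f.comp (X + C (c + d)) = f + C (f.eval (c + d)) := by
        intro c d hc hd
        have hev : f.eval (c + d) = f.eval c + f.eval d := by
          have h := congrArg (eval d) hc
          simp only [eval_comp, eval_add, eval_X, eval_C] at h
          rw [add_comm c d, h, add_comm]
        have h1 : f.comp (X + C (c + d)) = (f.comp (X + C c)).comp (X + C d) := by
          rw [comp_assoc, add_comp, X_comp, C_comp, C_add]
          ring_nf
        rw [h1, hc, add_comp, C_comp, hd, hev, C_add]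
        ring
      have hzero : f.comp (X + C (0 : F)) = f + C (f.eval 0) := by simp [hf0]
      have hnsmul : ∀ (k : ℕ) (c : F), f.comp (X + C c) = f + C (f.eval c) →
          f.comp (X + C (k • c)) = f + C (f.eval (k • c)) := by
        intro k
        induction k with
        | zero => intro c _; simpa using hzero
        | succ k ih => intro c hc; rw [succ_nsmul]; exact hadd _ _ (ih c hc) hc
      have key : ∀ c : F, f.comp (X + C c) = f + C (f.eval c) := by
        let S : Submodule (ZMod p) F :=
          { carrier := {c | f.comp (X + C c) = f + C (f.eval c)}
            zero_mem' := hzero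
            add_mem' := fun {c d} hc hd => hadd c d hc hd
            smul_mem' := by
              intro z c hc
              obtain ⟨k, rfl⟩ := ZMod.natCast_zmod_surjective z
              show f.comp (X + C ((k : ZMod p) • c)) = f + C (f.eval ((k : ZMod p) • c))
              rw [Nat.cast_smul_eq_nsmul]
              exact hnsmul k c hc }
        have hfinrank : Module.finrank (ZMod p) F = n := by
          have hc := Module.card_eq_pow_finrank (K := ZMod p) (V := F)
          rw [ZMod.card p, hcard] at hc
          exact Nat.pow_right_injective hp.two_le hc.symm
        have hspan : Submodule.span (ZMod p) (Set.range fun i : Fin n => a ^ (i : ℕ)) = ⊤ := by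
          haveI : Nonempty (Fin n) := ⟨⟨0, by omega⟩⟩
          exact ha'.span_eq_top_of_card_eq_finrank (by rw [Fintype.card_fin, hfinrank])
        have hle : Submodule.span (ZMod p) (Set.range fun i : Fin n => a ^ (i : ℕ)) ≤ S := by
          rw [Submodule.span_le]
          rintro _ ⟨i, rfl⟩
          exact (phiMap_fixed_iff _ _).mp (hfix i.1 (by omega))
        intro c
        exact hle (hspan ▸ Submodule.mem_top)
      -- Step B/C: support consists of p-th powers
      have hdeg' : f.natDegree < Fintype.card F := by rw [hcard]; omega
      have hsupp : ∀ m ∈ f.support, ∃ k ≤ n - 1, m = p ^ k := by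
        intro m hm
        have hm0 : m ≠ 0 := by
          intro h0
          have := mem_support_iff.mp hm
          rw [h0, coeff_zero_eq_eval_zero, hf0] at this
          exact this rfl
        have hchoose : ∀ j, 0 < j → j < m → p ∣ m.choose j := by
          intro j hj hjm
          have hz := coeff_mul_choose_eq_zero hdeg' key hj hjm
          have hcm : f.coeff m ≠ 0 := mem_support_iff.mp hm
          have : (m.choose j : F) = 0 := by
            rcases mul_eq_zero.mp hz with h | h
            · exact absurd h hcm
            · exact h
          exact (CharP.cast_eq_zero_iff F p _).mp this
        obtain ⟨k, rfl⟩ := eq_pow_of_dvd_choose hp hm0 hchoose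
        refine ⟨k, ?_, rfl⟩
        have h1 : p ^ k ≤ f.natDegree := le_natDegree_of_ne_zero (mem_support_iff.mp hm)
        have hmlt : p ^ k < p ^ n := by omega
        have := (Nat.pow_lt_pow_iff_right hp.one_lt).mp hmlt
        omega
      have hrep : f = ∑ m ∈ f.support, monomial m (f.coeff m) :=
        (f.sum_monomial_eq.symm).trans (Polynomial.sum_def f _)
      rw [hrep]
      apply Submodule.sum_mem
      intro m hm
      obtain ⟨k, hk, hmk⟩ := hsupp m hm
      rw [← C_mul_X_pow_eq_monomial, ← smul_eq_C_mul, hmk]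
      exact Submodule.smul_mem _ _ (Submodule.subset_span ⟨k, hk, rfl⟩)
    · intro hmem i hi
      exact phiMap_fixed_of_mem_span hp _ hsetdef hmem
  · -- finrank
    have hset : {g : F[X] | ∃ k ≤ n - 1, g = X ^ p ^ k}
        = Set.range (fun k : Fin n => (X : F[X]) ^ p ^ (k : ℕ)) := by
      ext g
      constructor
      · rintro ⟨k, hk, rfl⟩; exact ⟨⟨k, by omega⟩, rfl⟩
      · rintro ⟨k, rfl⟩; exact ⟨k.1, by omega, rfl⟩
    rw [hset]
    have base : LinearIndependent F fun m : ℕ => (X : F[X]) ^ m := by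
      have h := (Polynomial.basisMonomials F).linearIndependent
      rw [Polynomial.coe_basisMonomials] at h
      simpa only [X_pow_eq_monomial] using h
    have hinj : Function.Injective fun k : Fin n => p ^ (k : ℕ) :=
      fun i j h => Fin.val_injective (Nat.pow_right_injective hp.two_le h)
    have hli : LinearIndependent F (fun k : Fin n => (X : F[X]) ^ p ^ (k : ℕ)) :=
      base.comp _ hinj
    have hfr := finrank_span_eq_card hli
    rwa [Fintype.card_fin] at hfr
end

section
/- Let p be a prime, n ≥ 1, and F a finite field with p^n elements. The number of monic polynomials f ∈ F[x] which lie in the F-linear span of the monomials {x^{p^j} : 0 ≤ j ≤ n−1} (i.e. monic linearized polynomials) and whose evaluation map x ↦ f(x) is a bijection of F, is exactly (p^n − p)(p^n − p²)···(p^n − p^{n−1}) = ∏_{i=1}^{n−1} (p^n − p^i). -/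
open Polynomial

/-- over `F = 𝔽_{p^n}`, the number of monic linearized polynomials
(monic polynomials in the span of the monomials `x^(p^j)`, `0 ≤ j ≤ n−1`) whose
evaluation map is a bijection of `F` is `∏_{i=1}^{n−1} (p^n − p^i)`. -/
theorem card_monic_linearized_pp {F : Type*} [Field F] [Fintype F] (p n : ℕ)
    (hp : p.Prime) (hn : 1 ≤ n) (hcard : Fintype.card F = p ^ n) :
    Nat.card {f : F[X] //
        f.Monic ∧
        f ∈ Submodule.span F {g : F[X] | ∃ j ≤ n - 1, g = X ^ p ^ j} ∧
        Function.Bijective (fun x : F => f.eval x)} =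
      ∏ i ∈ Finset.Ico 1 n, (p ^ n - p ^ i) := by
  classical
  haveI : Fact p.Prime := ⟨hp⟩
  haveI : NeZero p := ⟨hp.ne_zero⟩
  have hp2 : 2 ≤ p := hp.two_le
  -- characteristic of F is p
  haveI hrchar : CharP F (ringChar F) := ringChar.charP F
  have hrp : (ringChar F).Prime := CharP.char_is_prime F _
  obtain ⟨m, -, hcard'⟩ := FiniteField.card F (ringChar F)
  have hrdvd : ringChar F ∣ p ^ n := by
    rw [← hcard, hcard']; exact dvd_pow_self _ (by positivity)
  have hrep : ringChar F = p :=
    (Nat.prime_dvd_prime_iff_eq hrp hp).mp (hrp.dvd_of_dvd_pow hrdvd)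
  haveI hcharp : CharP F p := hrep ▸ hrchar
  haveI : ExpChar F p := inferInstance
  letI : Algebra (ZMod p) F := ZMod.algebra F p
  -- dimension of F over ZMod p is n
  have hfr : Module.finrank (ZMod p) F = n := by
    have h1 : Fintype.card F = p ^ Module.finrank (ZMod p) F := by
      have := Module.card_eq_pow_finrank (K := ZMod p) (V := F)
      rwa [ZMod.card] at this
    exact (Nat.pow_right_injective hp2 (hcard.symm.trans h1)).symm
  let b : Module.Basis (Fin n) (ZMod p) F := Module.finBasisOfFinrankEq (ZMod p) F hfr
  -- the coefficient parametrization of linearized polynomials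
  set P : (Fin n → F) → F[X] := fun c => ∑ j, c j • (X : F[X]) ^ p ^ (j : ℕ) with hP
  have hpinj : Function.Injective (fun j : Fin n => p ^ (j : ℕ)) := by
    intro i j h
    exact Fin.val_injective (Nat.pow_right_injective hp2 h)
  have hcoeff : ∀ (c : Fin n → F) (j : Fin n), (P c).coeff (p ^ (j : ℕ)) = c j := by
    intro c j
    rw [hP]
    rw [finset_sum_coeff]
    rw [Finset.sum_eq_single j]
    · simp [coeff_smul, coeff_X_pow]
    · intro i _ hij
      have hne : p ^ ((j : ℕ)) ≠ p ^ ((i : ℕ)) := fun h => hij (hpinj h).symm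
      simp [coeff_smul, coeff_X_pow, if_neg hne]
    · intro h; exact absurd (Finset.mem_univ j) h
  have hPinj : Function.Injective P := by
    intro c c' h
    funext j
    rw [← hcoeff c j, ← hcoeff c' j, h]
  have hPdeg : ∀ c, (P c).natDegree ≤ p ^ (n - 1) := by
    intro c
    refine natDegree_sum_le_of_forall_le _ _ fun j _ => ?_
    refine le_trans (natDegree_smul_le _ _) ?_
    rw [natDegree_X_pow]
    exact Nat.pow_le_pow_right hp.one_lt.le (Nat.le_pred_of_lt j.isLt)
  have hltcard : p ^ (n - 1) < Fintype.card F := by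
    rw [hcard]
    exact Nat.pow_lt_pow_right hp.one_lt (by omega)
  have hPeval : ∀ (c : Fin n → F) (x : F), (P c).eval x = ∑ j, c j * x ^ p ^ (j : ℕ) := by
    intro c x
    rw [hP]
    simp [eval_finset_sum, smul_eq_C_mul]
  -- the span characterization
  have hsetS : {g : F[X] | ∃ j ≤ n - 1, g = X ^ p ^ j} =
      Set.range (fun j : Fin n => (X : F[X]) ^ p ^ (j : ℕ)) := by
    ext g
    constructor
    · rintro ⟨j, hj, rfl⟩
      exact ⟨⟨j, (Nat.lt_iff_le_pred hn).mpr hj⟩, rfl⟩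
    · rintro ⟨j, rfl⟩
      exact ⟨(j : ℕ), Nat.le_pred_of_lt j.isLt, rfl⟩
  have hspan : ∀ f : F[X],
      f ∈ Submodule.span F {g : F[X] | ∃ j ≤ n - 1, g = X ^ p ^ j} ↔ ∃ c, P c = f := by
    intro f
    rw [hsetS, Submodule.mem_span_range_iff_exists_fun]
  -- the associated ZMod p - linear endomorphism
  have hadd : ∀ (c : Fin n → F) (x y : F), (P c).eval (x + y) = (P c).eval x + (P c).eval y := by
    intro c x y
    rw [hPeval, hPeval, hPeval, ← Finset.sum_add_distrib]
    refine Finset.sum_congr rfl fun j _ => ?_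
    rw [add_pow_char_pow, mul_add]
  have hzero : ∀ (c : Fin n → F), (P c).eval 0 = 0 := by
    intro c
    rw [hPeval]
    refine Finset.sum_eq_zero fun j _ => ?_
    rw [zero_pow (pow_ne_zero _ hp.ne_zero), mul_zero]
  set σ : (Fin n → F) → (F →ₗ[ZMod p] F) := fun c =>
    AddMonoidHom.toZModLinearMap p
      { toFun := fun x => (P c).eval x
        map_zero' := hzero c
        map_add' := hadd c } with hσ
  have hσcoe : ∀ c, ⇑(σ c) = fun x => (P c).eval x := fun c => rfl
  have hσinj : Function.Injective σ := by
    intro c c' h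
    apply hPinj
    have heval : ∀ x : F, (P c).eval x = (P c').eval x := by
      intro x
      have := congrFun (congrArg (fun g : F →ₗ[ZMod p] F => ⇑g) h) x
      simpa [hσcoe] using this
    have hsub : P c - P c' = 0 := by
      refine eq_zero_of_natDegree_lt_card_of_eval_eq_zero _ Function.injective_id
        (fun x => by simp [eval_sub, heval x]) ?_
      refine lt_of_le_of_lt (le_trans (natDegree_sub_le _ _) ?_) hltcard
      exact max_le (hPdeg c) (hPdeg c')
    exact sub_eq_zero.mp hsub
  haveI : Finite (F →ₗ[ZMod p] F) := Finite.of_injective _ DFunLike.coe_injective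
  have hσbij : Function.Bijective σ := by
    rw [Nat.bijective_iff_injective_and_card]
    refine ⟨hσinj, ?_⟩
    have h1 : Nat.card (F →ₗ[ZMod p] F) = p ^ (n * n) := by
      rw [Nat.card_congr (LinearMap.toMatrix b b).toEquiv, Nat.card_eq_fintype_card,
        show Fintype.card (Matrix (Fin n) (Fin n) (ZMod p)) =
          Fintype.card (Fin n → Fin n → ZMod p) from rfl]
      simp [Fintype.card_fun, ZMod.card, pow_mul]
    have h2 : Nat.card (Fin n → F) = p ^ (n * n) := by
      rw [Nat.card_eq_fintype_card, Fintype.card_fun, hcard, Fintype.card_fin, ← pow_mul]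
    rw [h1, h2]
  -- the cardinality of the bijective linearized polynomials (without monic)
  have key1 : Nat.card {f : F[X] //
        f ∈ Submodule.span F {g : F[X] | ∃ j ≤ n - 1, g = X ^ p ^ j} ∧
        Function.Bijective (fun x : F => f.eval x)} =
      Nat.card {c : Fin n → F // Function.Bijective (fun x : F => (P c).eval x)} := by
    refine Nat.card_congr (Equiv.symm (Equiv.ofBijective
      (fun c => ⟨P c.1, (hspan _).mpr ⟨c.1, rfl⟩, c.2⟩) ⟨?_, ?_⟩))
    · intro c c' h
      exact Subtype.ext (hPinj (congrArg Subtype.val h))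
    · rintro ⟨f, hf, hbij⟩
      obtain ⟨c, hc⟩ := (hspan f).mp hf
      exact ⟨⟨c, hc ▸ hbij⟩, Subtype.ext hc⟩
  have key2 : Nat.card {c : Fin n → F // Function.Bijective (fun x : F => (P c).eval x)} =
      Nat.card {g : F →ₗ[ZMod p] F // Function.Bijective ⇑g} := by
    refine Nat.card_congr (Equiv.subtypeEquiv (Equiv.ofBijective σ hσbij) fun c => ?_)
    rw [Equiv.ofBijective_apply, hσcoe]
  have key3 : Nat.card {g : F →ₗ[ZMod p] F // Function.Bijective ⇑g} =
      Nat.card (F ≃ₗ[ZMod p] F) := by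
    refine Nat.card_congr
      { toFun := fun g => LinearEquiv.ofBijective g.1 g.2
        invFun := fun e => ⟨↑e, e.bijective⟩
        left_inv := fun g => Subtype.ext rfl
        right_inv := fun e => by ext x; rfl }
  have key4 : Nat.card (F ≃ₗ[ZMod p] F) = Nat.card (GL (Fin n) (ZMod p)) := by
    refine Nat.card_congr (((LinearMap.GeneralLinearGroup.generalLinearEquiv
      (ZMod p) F).symm.trans (Units.mapEquiv (LinearMap.toMatrixAlgEquiv b).toMulEquiv)).toEquiv)
  have key5 : Nat.card (GL (Fin n) (ZMod p)) = ∏ i : Fin n, (p ^ n - p ^ (i : ℕ)) := by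
    rw [Matrix.card_GL_field]
    simp [ZMod.card]
  -- the scaling bijection between all bijective linearized polys and monic ones
  set MonT := {f : F[X] //
        f.Monic ∧
        f ∈ Submodule.span F {g : F[X] | ∃ j ≤ n - 1, g = X ^ p ^ j} ∧
        Function.Bijective (fun x : F => f.eval x)} with hMonT
  have hsmul_eval : ∀ (a : F) (f : F[X]), a ≠ 0 →
      Function.Bijective (fun x : F => f.eval x) →
      Function.Bijective (fun x : F => (a • f).eval x) := by
    intro a f ha hbij
    have : (fun x : F => (a • f).eval x) = (fun y : F => a * y) ∘ (fun x : F => f.eval x) := by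
      funext x
      simp [smul_eq_C_mul]
    rw [this]
    exact (Equiv.mulLeft₀ a ha).bijective.comp hbij
  have hlead_smul : ∀ (a : F) (f : F[X]), (a • f).leadingCoeff = a * f.leadingCoeff := by
    intro a f
    rw [smul_eq_C_mul, leadingCoeff_mul, leadingCoeff_C]
  have keyT : Nat.card {f : F[X] //
        f ∈ Submodule.span F {g : F[X] | ∃ j ≤ n - 1, g = X ^ p ^ j} ∧
        Function.Bijective (fun x : F => f.eval x)} = (p ^ n - 1) * Nat.card MonT := by
    have e : Fˣ × MonT ≃ {f : F[X] //
        f ∈ Submodule.span F {g : F[X] | ∃ j ≤ n - 1, g = X ^ p ^ j} ∧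
        Function.Bijective (fun x : F => f.eval x)} := by
      refine Equiv.ofBijective (fun uf =>
        ⟨(uf.1 : F) • uf.2.1,
          Submodule.smul_mem _ _ uf.2.2.2.1,
          hsmul_eval _ _ uf.1.ne_zero uf.2.2.2.2⟩) ⟨?_, ?_⟩
      · rintro ⟨u, f, hf, hfmem, hfbij⟩ ⟨u', f', hf', hfmem', hfbij'⟩ h
        have hval : (u : F) • f = (u' : F) • f' := congrArg Subtype.val h
        have hu : (u : F) = (u' : F) := by
          have h1 : ((u : F) • f).leadingCoeff = ((u' : F) • f').leadingCoeff := by rw [hval]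
          rwa [hlead_smul, hlead_smul, hf, hf', mul_one, mul_one] at h1
        rw [hu] at hval
        have hff : f = f' := smul_right_injective F[X] u'.ne_zero hval
        simp only [Prod.mk.injEq, Subtype.mk.injEq]
        exact ⟨Units.ext hu, Subtype.ext hff⟩
      · rintro ⟨f, hfmem, hfbij⟩
        have hf0 : f ≠ 0 := by
          rintro rfl
          have h01 := hfbij.injective (a₁ := 0) (a₂ := 1) (by simp)
          exact zero_ne_one h01
        have hl : f.leadingCoeff ≠ 0 := leadingCoeff_ne_zero.mpr hf0
        refine ⟨⟨Units.mk0 f.leadingCoeff hl,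
          ⟨f.leadingCoeff⁻¹ • f, ?_, Submodule.smul_mem _ _ hfmem,
            hsmul_eval _ _ (inv_ne_zero hl) hfbij⟩⟩, ?_⟩
        · show (f.leadingCoeff⁻¹ • f).leadingCoeff = 1
          rw [hlead_smul, inv_mul_cancel₀ hl]
        · apply Subtype.ext
          show f.leadingCoeff • f.leadingCoeff⁻¹ • f = f
          rw [smul_smul, mul_inv_cancel₀ hl, one_smul]
    rw [← Nat.card_congr e, Nat.card_prod, Nat.card_units, Nat.card_eq_fintype_card, hcard]
  -- put everything together
  have hfinal : (p ^ n - 1) * Nat.card MonT = ∏ i : Fin n, (p ^ n - p ^ (i : ℕ)) := by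
    rw [← keyT, key1, key2, key3, key4, key5]
  have hprod : ∏ i : Fin n, (p ^ n - p ^ (i : ℕ)) =
      (p ^ n - 1) * ∏ i ∈ Finset.Ico 1 n, (p ^ n - p ^ i) := by
    rw [Fin.prod_univ_eq_prod_range (fun k => p ^ n - p ^ k) n, Finset.range_eq_Ico,
      Finset.prod_eq_prod_Ico_succ_bot (by omega : 0 < n)]
    simp
  have hpos : 0 < p ^ n - 1 := by
    have h2 : 2 ≤ p ^ n := le_trans hp2 (Nat.le_self_pow (by omega) p)
    omega
  refine Nat.eq_of_mul_eq_mul_left hpos ?_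
  rw [hfinal, hprod]
end

section
/- Let p be a prime, F a finite field with p² elements, m an integer with 2 ≤ m ≤ p − 1, b ∈ F with b^{p+1} = 1, and α, β ∈ F with α^{p+1} ≠ β^{p+1} and (β + bα)^{p−1} = (−1)^m b^{mp−1}. Define d = (−1)^m b^{mp}, γ = −α/(β^{p+1} − α^{p+1}), ε = β^p/(β^{p+1} − α^{p+1}), and δ = (−γd − ε)/(β^p − αd)^m. Then the map f : F → F given by f(x) = (x^p − b·x)^m + α·x^p + β·x is a bijection of F, and the map h : F → F given by h(x) = δ·(x^p − d·x)^m + γ·x^p + ε·x is its two-sided compositional inverse: h(f(x)) = x and f(h(x)) = x for all x ∈ F. -/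
/-- over `F = 𝔽_{p²}`, for `2 ≤ m ≤ p − 1`, `b` a `(p+1)`-th root of
unity, and `α, β` with `α^(p+1) ≠ β^(p+1)` and `(β + bα)^(p−1) = (−1)^m b^(mp−1)`,
the map `f(x) = (x^p − bx)^m + αx^p + βx` is a bijection of `F`, with two-sided
compositional inverse `h(x) = δ(x^p − dx)^m + γx^p + εx`, where
`d = (−1)^m b^(mp)`, `γ = −α/(β^(p+1) − α^(p+1))`, `ε = β^p/(β^(p+1) − α^(p+1))`
and `δ = (−γd − ε)/(β^p − αd)^m`. -/
theorem pp_and_compositional_inverse {F : Type*} [Field F] [Fintype F]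
    (p : ℕ) (hp : p.Prime) (hcard : Fintype.card F = p ^ 2)
    (m : ℕ) (hm1 : 2 ≤ m) (hm2 : m ≤ p - 1)
    (b : F) (hb : b ^ (p + 1) = 1)
    (α β : F) (hαβ : α ^ (p + 1) ≠ β ^ (p + 1))
    (hcond : (β + b * α) ^ (p - 1) = (-1 : F) ^ m * b ^ (m * p - 1))
    (d γ ε δ : F)
    (hd : d = (-1 : F) ^ m * b ^ (m * p))
    (hγ : γ = -α / (β ^ (p + 1) - α ^ (p + 1)))
    (hε : ε = β ^ p / (β ^ (p + 1) - α ^ (p + 1)))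
    (hδ : δ = (-γ * d - ε) / (β ^ p - α * d) ^ m) :
    Function.Bijective (fun x : F => (x ^ p - b * x) ^ m + α * x ^ p + β * x) ∧
    (∀ x : F,
      δ * (((x ^ p - b * x) ^ m + α * x ^ p + β * x) ^ p
            - d * ((x ^ p - b * x) ^ m + α * x ^ p + β * x)) ^ m
        + γ * ((x ^ p - b * x) ^ m + α * x ^ p + β * x) ^ p
        + ε * ((x ^ p - b * x) ^ m + α * x ^ p + β * x) = x) ∧
    (∀ x : F,
      ((δ * (x ^ p - d * x) ^ m + γ * x ^ p + ε * x) ^ p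
          - b * (δ * (x ^ p - d * x) ^ m + γ * x ^ p + ε * x)) ^ m
        + α * (δ * (x ^ p - d * x) ^ m + γ * x ^ p + ε * x) ^ p
        + β * (δ * (x ^ p - d * x) ^ m + γ * x ^ p + ε * x) = x) := by
  -- characteristic
  haveI : CharP F (ringChar F) := ringChar.charP F
  have hq : (ringChar F).Prime := CharP.char_is_prime F (ringChar F)
  obtain ⟨n, hn⟩ := FiniteField.card F (ringChar F)
  have hqp : ringChar F = p := by
    have : ringChar F ∣ p ^ 2 := by
      rw [← hcard, hn.2]; exact dvd_pow_self _ n.ne_zero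
    exact (Nat.prime_dvd_prime_iff_eq hq hp).mp (hq.dvd_of_dvd_pow this)
  haveI hcharP : CharP F p := hqp ▸ ringChar.charP F
  haveI : Fact p.Prime := ⟨hp⟩
  have hp3 : 3 ≤ p := by have := hp.two_le; omega
  have hpodd : Odd p := hp.odd_of_ne_two (by omega)
  have hneg1 : (-1 : F) ^ p = -1 := hpodd.neg_one_pow
  have hxp2 : ∀ x : F, (x ^ p) ^ p = x := by
    intro x
    rw [← pow_mul, ← sq, ← hcard]
    exact FiniteField.pow_card x
  have hfa : ∀ x y : F, (x + y) ^ p = x ^ p + y ^ p := fun x y => add_pow_char x y p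
  have hfs : ∀ x y : F, (x - y) ^ p = x ^ p - y ^ p := fun x y => sub_pow_char x y (p := p)
  have hpowp : ∀ (u : F) (k : ℕ), (u ^ k) ^ p = (u ^ p) ^ k := fun u k => by
    rw [← pow_mul, mul_comm, pow_mul]
  have hmm : m - 1 + 1 = m := by omega
  -- basic scalar facts
  have hb0 : b ≠ 0 := by
    intro h; rw [h, zero_pow (by omega)] at hb; exact zero_ne_one hb
  have hbp : b ^ p * b = 1 := by rw [← pow_succ]; exact hb
  have hd2 : d = (-(b ^ p)) ^ m := by
    rw [hd, mul_comm m p, pow_mul, ← mul_pow, neg_one_mul]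
  have hdp : d ^ p = (-b) ^ m := by
    have hbb : (-(b ^ p)) ^ p = -b := by
      rw [neg_pow, hneg1, hxp2 b, neg_one_mul]
    rw [hd2, ← pow_mul, mul_comm, pow_mul, hbb]
  have hK2 : d ^ p * d = 1 := by
    rw [hdp, hd2, ← mul_pow]
    have : -b * -(b ^ p) = 1 := by rw [neg_mul_neg, mul_comm]; exact hbp
    rw [this, one_pow]
  have hd0 : d ≠ 0 := by
    intro h; rw [h, mul_zero] at hK2; exact zero_ne_one hK2
  have hsq : (-1 : F) ^ m * (-1 : F) ^ m = 1 := by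
    rw [← mul_pow]; norm_num
  have hmb : (-1 : F) ^ m * d ^ p = b ^ m := by
    rw [hdp, ← mul_pow, neg_mul_neg, one_mul]
  have hβbα : β + b * α ≠ 0 := by
    intro h
    rw [h, zero_pow (by omega)] at hcond
    exact (mul_ne_zero (pow_ne_zero m (by norm_num : (-1 : F) ≠ 0))
      (pow_ne_zero _ hb0)) hcond.symm
  have hK0 : α ^ p - d * β = -(b * (β ^ p - d * α)) := by
    have h1 : (β + b * α) ^ (p - 1) * (β + b * α)
        = (-1 : F) ^ m * b ^ (m * p - 1) * (β + b * α) := by rw [hcond]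
    rw [← pow_succ] at h1
    have hps : p - 1 + 1 = p := by omega
    rw [hps] at h1
    have h2 : b * (β + b * α) ^ p = (-1 : F) ^ m * (b ^ (m * p - 1) * b) * (β + b * α) := by
      rw [h1]; ring
    rw [← pow_succ] at h2
    have hmp : m * p - 1 + 1 = m * p := by
      have : 2 * 3 ≤ m * p := Nat.mul_le_mul hm1 hp3
      omega
    rw [hmp, ← hd] at h2
    have h3 : (β + b * α) ^ p = β ^ p + b ^ p * α ^ p := by rw [hfa, mul_pow]
    rw [h3] at h2
    linear_combination h2 - α ^ p * hbp
  -- Δ facts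
  have hΔ : β ^ (p + 1) - α ^ (p + 1) ≠ 0 := sub_ne_zero.mpr (Ne.symm hαβ)
  have hps1 : ∀ x : F, x ^ (p + 1) = x ^ p * x := fun x => pow_succ x p
  have hΔp : (β ^ (p + 1) - α ^ (p + 1)) ^ p = β ^ (p + 1) - α ^ (p + 1) := by
    have hx : ∀ x : F, (x ^ (p + 1)) ^ p = x ^ (p + 1) := by
      intro x
      calc (x ^ (p + 1)) ^ p = (x ^ p) ^ p * x ^ p := by rw [pow_succ, mul_pow]
        _ = x * x ^ p := by rw [hxp2]
        _ = x ^ (p + 1) := by rw [pow_succ, mul_comm]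
    rw [hfs, hx, hx]
  have hγΔ : γ * (β ^ (p + 1) - α ^ (p + 1)) = -α := by
    rw [hγ, div_mul_cancel₀ _ hΔ]
  have hεΔ : ε * (β ^ (p + 1) - α ^ (p + 1)) = β ^ p := by
    rw [hε, div_mul_cancel₀ _ hΔ]
  have hγpΔ : γ ^ p * (β ^ (p + 1) - α ^ (p + 1)) = -(α ^ p) := by
    calc γ ^ p * (β ^ (p + 1) - α ^ (p + 1))
        = (γ * (β ^ (p + 1) - α ^ (p + 1))) ^ p := by rw [mul_pow, hΔp]
      _ = -(α ^ p) := by rw [hγΔ, neg_pow, hneg1, neg_one_mul]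
  have hεpΔ : ε ^ p * (β ^ (p + 1) - α ^ (p + 1)) = β := by
    calc ε ^ p * (β ^ (p + 1) - α ^ (p + 1))
        = (ε * (β ^ (p + 1) - α ^ (p + 1))) ^ p := by rw [mul_pow, hΔp]
      _ = β := by rw [hεΔ, hxp2]
  have h1 : γ * β ^ p + ε * α = 0 := by
    apply mul_right_cancel₀ hΔ
    linear_combination β ^ p * hγΔ + α * hεΔ
  have h2 : γ * α ^ p + ε * β = 1 := by
    apply mul_right_cancel₀ hΔ
    linear_combination α ^ p * hγΔ + β * hεΔ - hps1 β + hps1 α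
  have hK5 : α * ε ^ p + β * γ = 0 := by
    apply mul_right_cancel₀ hΔ
    linear_combination α * hεpΔ + β * hγΔ
  have hK6 : α * γ ^ p + β * ε = 1 := by
    apply mul_right_cancel₀ hΔ
    linear_combination α * hγpΔ + β * hεΔ - hps1 β + hps1 α
  have hK4 : γ ^ p - b * ε = -(d * (ε ^ p - b * γ)) := by
    apply mul_right_cancel₀ hΔ
    linear_combination hγpΔ - b * hεΔ + d * hεpΔ + (-(d * b)) * hγΔ - hK0
  have hβαd : β ^ p - α * d ≠ 0 := by
    intro h
    apply hαβ
    have hβp : β ^ p = α * d := sub_eq_zero.mp h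
    have hαp : α ^ p = d * β := by linear_combination hK0 - b * h
    rw [hps1 α, hps1 β, hαp, hβp]; ring
  have hKδ : δ * (β ^ p - α * d) ^ m = -(γ * d) - ε := by
    rw [hδ, div_mul_cancel₀ _ (pow_ne_zero m hβαd)]; ring
  have hpowm : (β ^ p - α * d) ^ m = (β ^ p - α * d) ^ (m - 1) * (β ^ p - α * d) := by
    rw [← pow_succ, hmm]
  have hδΔ : δ * (β ^ (p + 1) - α ^ (p + 1)) * (β ^ p - α * d) ^ (m - 1) = -1 := by
    have e1 : δ * (β ^ p - α * d) ^ m * (β ^ (p + 1) - α ^ (p + 1))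
        = -(β ^ p - α * d) := by
      linear_combination (β ^ (p + 1) - α ^ (p + 1)) * hKδ - d * hγΔ - hεΔ
    apply mul_right_cancel₀ hβαd
    linear_combination e1 - (δ * (β ^ (p + 1) - α ^ (p + 1))) * hpowm
  have hK8 : β - α ^ p * d ^ p = b * d ^ p * (β ^ p - α * d) := by
    apply mul_right_cancel₀ hd0
    linear_combination (-1 : F) * hK0 + (-(α ^ p) - b * (β ^ p - α * d)) * hK2
  have hxP : (β ^ p - α * d) ^ p = b * d ^ p * (β ^ p - α * d) := by
    rw [hfs, hxp2, mul_pow]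
    exact hK8
  have hK3' : δ ^ p * (b ^ (m - 1) * (d ^ p) ^ (m - 1)) = δ := by
    have h := congrArg (· ^ p) hδΔ
    simp only [mul_pow, hΔp, hpowp, hxP, hneg1] at h
    apply mul_right_cancel₀ hΔ
    apply mul_right_cancel₀ (pow_ne_zero (m - 1) hβαd)
    linear_combination h - hδΔ
  have hK3 : δ ^ p * (-(d ^ p)) ^ m = b * δ := by
    have hbm : b ^ m = b ^ (m - 1) * b := by rw [← pow_succ, hmm]
    have hdpm : (d ^ p) ^ m = (d ^ p) ^ (m - 1) * d ^ p := by rw [← pow_succ, hmm]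
    calc δ ^ p * (-(d ^ p)) ^ m = δ ^ p * ((-1) ^ m * (d ^ p) ^ m) := by rw [neg_pow]
      _ = δ ^ p * ((d ^ p) ^ (m - 1) * ((-1) ^ m * d ^ p)) := by rw [hdpm]; ring
      _ = δ ^ p * ((d ^ p) ^ (m - 1) * (b ^ (m - 1) * b)) := by rw [hmb, hbm]
      _ = δ ^ p * (b ^ (m - 1) * (d ^ p) ^ (m - 1)) * b := by ring
      _ = b * δ := by rw [hK3']; ring
  have hK9 : (β + b * α) * (β ^ p - α * d) = β ^ (p + 1) - α ^ (p + 1) := by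
    linear_combination α * hK0 - hps1 β + hps1 α
  have heΔ : (ε ^ p - b * γ) * (β ^ (p + 1) - α ^ (p + 1)) = β + b * α := by
    linear_combination hεpΔ - b * hγΔ
  have he1 : (ε ^ p - b * γ) * (β ^ p - α * d) = 1 := by
    apply mul_right_cancel₀ hΔ
    linear_combination (β ^ p - α * d) * heΔ + hK9
  have hK7 : (ε ^ p - b * γ) ^ m + δ * (b * α + β) = 0 := by
    have he1m : (ε ^ p - b * γ) ^ m * (β ^ p - α * d) ^ m = 1 := by
      rw [← mul_pow, he1, one_pow]
    apply mul_right_cancel₀ (mul_ne_zero (pow_ne_zero m hβαd) hΔ)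
    linear_combination (β ^ (p + 1) - α ^ (p + 1)) * he1m
      + (b * α + β) * (β ^ (p + 1) - α ^ (p + 1)) * hKδ
      - (b * α + β) * d * hγΔ - (b * α + β) * hεΔ - hK9
  -- main identities
  have Hhf : ∀ x : F,
      δ * (((x ^ p - b * x) ^ m + α * x ^ p + β * x) ^ p
            - d * ((x ^ p - b * x) ^ m + α * x ^ p + β * x)) ^ m
        + γ * ((x ^ p - b * x) ^ m + α * x ^ p + β * x) ^ p
        + ε * ((x ^ p - b * x) ^ m + α * x ^ p + β * x) = x := by
    intro x
    have htp : (x ^ p - b * x) ^ p = -(b ^ p) * (x ^ p - b * x) := by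
      rw [hfs, hxp2, mul_pow]
      linear_combination (-x) * hbp
    have htpm : ((x ^ p - b * x) ^ m) ^ p = d * (x ^ p - b * x) ^ m := by
      rw [hpowp, htp, mul_pow, ← hd2]
    have hfp : ((x ^ p - b * x) ^ m + α * x ^ p + β * x) ^ p
        = d * (x ^ p - b * x) ^ m + α ^ p * x + β ^ p * x ^ p := by
      rw [hfa, hfa, htpm, mul_pow, mul_pow, hxp2]
    have hstep : d * (x ^ p - b * x) ^ m + α ^ p * x + β ^ p * x ^ p
        - d * ((x ^ p - b * x) ^ m + α * x ^ p + β * x)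
        = (β ^ p - d * α) * (x ^ p - b * x) := by
      linear_combination x * hK0
    rw [hfp, hstep, mul_pow]
    linear_combination (x ^ p - b * x) ^ m * hKδ + x ^ p * h1 + x * h2
  have Hfh : ∀ x : F,
      ((δ * (x ^ p - d * x) ^ m + γ * x ^ p + ε * x) ^ p
          - b * (δ * (x ^ p - d * x) ^ m + γ * x ^ p + ε * x)) ^ m
        + α * (δ * (x ^ p - d * x) ^ m + γ * x ^ p + ε * x) ^ p
        + β * (δ * (x ^ p - d * x) ^ m + γ * x ^ p + ε * x) = x := by
    intro x
    have hsp : (x ^ p - d * x) ^ p = -(d ^ p) * (x ^ p - d * x) := by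
      rw [hfs, hxp2, mul_pow]
      linear_combination (-x) * hK2
    have hspm : ((x ^ p - d * x) ^ m) ^ p = (-(d ^ p)) ^ m * (x ^ p - d * x) ^ m := by
      rw [hpowp, hsp, mul_pow]
    have hhp : (δ * (x ^ p - d * x) ^ m + γ * x ^ p + ε * x) ^ p
        = b * δ * (x ^ p - d * x) ^ m + γ ^ p * x + ε ^ p * x ^ p := by
      rw [hfa, hfa, mul_pow, hspm, mul_pow, mul_pow, hxp2]
      linear_combination (x ^ p - d * x) ^ m * hK3
    have hstep2 : b * δ * (x ^ p - d * x) ^ m + γ ^ p * x + ε ^ p * x ^ p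
        - b * (δ * (x ^ p - d * x) ^ m + γ * x ^ p + ε * x)
        = (ε ^ p - b * γ) * (x ^ p - d * x) := by
      linear_combination x * hK4
    rw [hhp, hstep2, mul_pow]
    linear_combination (x ^ p - d * x) ^ m * hK7 + x ^ p * hK5 + x * hK6
  have hL : Function.LeftInverse
      (fun y : F => δ * (y ^ p - d * y) ^ m + γ * y ^ p + ε * y)
      (fun x : F => (x ^ p - b * x) ^ m + α * x ^ p + β * x) := Hhf
  have hR : Function.RightInverse
      (fun y : F => δ * (y ^ p - d * y) ^ m + γ * y ^ p + ε * y)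
      (fun x : F => (x ^ p - b * x) ^ m + α * x ^ p + β * x) := Hfh
  exact ⟨⟨hL.injective, hR.surjective⟩, Hhf, Hfh⟩
end

section
/- Let p be a prime, F a finite field with p² elements, m an integer with 2 ≤ m ≤ p − 1, b ∈ F with b^{p+1} = 1, and α, β ∈ F with α^{p+1} ≠ β^{p+1} and (β + bα)^{p−1} = (−1)^m b^{mp−1}. Define d = (−1)^m b^{mp}, γ = −α/(β^{p+1} − α^{p+1}), ε = β^p/(β^{p+1} − α^{p+1}), and δ = (−γd − ε)/(β^p − αd)^m. Then b^{m²} · δ^p = b · δ. -/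
/-- over `F = 𝔽_{p²}`, with `2 ≤ m ≤ p − 1`, `b^(p+1) = 1`,
`α^(p+1) ≠ β^(p+1)`, `(β + bα)^(p−1) = (−1)^m b^(mp−1)`, and with
`d = (−1)^m b^(mp)`, `γ = −α/(β^(p+1) − α^(p+1))`, `ε = β^p/(β^(p+1) − α^(p+1))`,
`δ = (−γd − ε)/(β^p − αd)^m`, one has `b^(m²) δ^p = b δ`. -/
theorem delta_property {F : Type*} [Field F] [Fintype F]
    (p : ℕ) (hp : p.Prime) (hcard : Fintype.card F = p ^ 2)
    (m : ℕ) (hm1 : 2 ≤ m) (hm2 : m ≤ p - 1)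
    (b : F) (hb : b ^ (p + 1) = 1)
    (α β : F) (hαβ : α ^ (p + 1) ≠ β ^ (p + 1))
    (hcond : (β + b * α) ^ (p - 1) = (-1 : F) ^ m * b ^ (m * p - 1))
    (d γ ε δ : F)
    (hd : d = (-1 : F) ^ m * b ^ (m * p))
    (hγ : γ = -α / (β ^ (p + 1) - α ^ (p + 1)))
    (hε : ε = β ^ p / (β ^ (p + 1) - α ^ (p + 1)))
    (hδ : δ = (-γ * d - ε) / (β ^ p - α * d) ^ m) :
    b ^ (m ^ 2) * δ ^ p = b * δ := by
  have hp2 := hp.two_le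
  have hp3 : 3 ≤ p := by omega
  haveI := Fact.mk hp
  have hrc : ringChar F = p := by
    have h0 : ((p ^ 2 : ℕ) : F) = 0 := by rw [← hcard]; exact FiniteField.cast_card_eq_zero F
    have h1 : ringChar F ∣ p ^ 2 := ringChar.dvd h0
    have h2 : (ringChar F).Prime := CharP.char_is_prime F (ringChar F)
    exact (Nat.prime_dvd_prime_iff_eq h2 hp).mp (h2.dvd_of_dvd_pow h1)
  haveI hchar : CharP F p := hrc ▸ ringChar.charP F
  have pow_card : ∀ x : F, x ^ (p ^ 2) = x := fun x => by
    rw [← hcard]; exact FiniteField.pow_card x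
  have hb0 : b ≠ 0 := by
    intro h; rw [h, zero_pow (by omega : p + 1 ≠ 0)] at hb; exact zero_ne_one hb
  have hN : β ^ (p + 1) - α ^ (p + 1) ≠ 0 := sub_ne_zero_of_ne (Ne.symm hαβ)
  have hd0 : d ≠ 0 := by
    rw [hd]
    exact mul_ne_zero (pow_ne_zero _ (by norm_num)) (pow_ne_zero _ hb0)
  have hbmp : b ^ (m * p) = b ^ (m * p - 1) * b := by
    rw [← pow_succ, Nat.sub_add_cancel (by nlinarith : 1 ≤ m * p)]
  have key1 : b * β ^ p + α ^ p = d * (β + b * α) := by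
    have h1 : β ^ p + b ^ p * α ^ p = (-1) ^ m * b ^ (m * p - 1) * (β + b * α) := by
      rw [← mul_pow, ← add_pow_char, ← hcond, ← pow_succ,
        Nat.sub_add_cancel (by omega : 1 ≤ p)]
    have hbp1 : b ^ p * b = 1 := by rw [← pow_succ]; exact hb
    rw [hd]
    linear_combination b * h1 - α ^ p * hbp1 - ((-1:F) ^ m * (β + b * α)) * hbmp
  have hkey : β * d - α ^ p = b * (β ^ p - α * d) := by linear_combination -key1
  have hZ : β ^ p - α * d ≠ 0 := by
    intro h
    apply hαβ
    have hβp : β ^ p = α * d := by linear_combination h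
    have hαp : α ^ p = β * d := by linear_combination -hkey - b * h
    calc α ^ (p + 1) = α ^ p * α := pow_succ α p
      _ = β ^ p * β := by rw [hαp, hβp]; ring
      _ = β ^ (p + 1) := (pow_succ β p).symm
  have hdp : d ^ p = (-1) ^ m * b ^ m := by
    rw [hd, mul_pow, ← pow_mul, ← pow_mul]
    rw [mul_comm m p, pow_mul, neg_one_pow_char F p]
    congr 1
    rw [show p * m * p = p ^ 2 * m by ring, pow_mul, pow_card b]
  have hddp : d * d ^ p = 1 := by
    have h2 : ((-1:F) ^ m) * ((-1:F) ^ m) = 1 := by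
      rw [← pow_add]; exact Even.neg_one_pow ⟨m, rfl⟩
    have h3 : b ^ (m * p) * b ^ m = 1 := by
      rw [← pow_add, show m * p + m = (p + 1) * m by ring, pow_mul, hb, one_pow]
    rw [hdp, hd]
    linear_combination (b ^ (m * p) * b ^ m) * h2 + h3
  have hNp : (β ^ (p + 1) - α ^ (p + 1)) ^ p = β ^ (p + 1) - α ^ (p + 1) := by
    rw [sub_pow_char, ← pow_mul, ← pow_mul]
    have hx : ∀ x : F, x ^ ((p + 1) * p) = x ^ (p + 1) := fun x => by
      rw [show (p + 1) * p = p ^ 2 + p by ring, pow_add, pow_card x, pow_succ]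
      ring
    rw [hx, hx]
  have hZp : d * (β ^ p - α * d) ^ p = b * (β ^ p - α * d) := by
    rw [sub_pow_char, mul_pow, ← pow_mul]
    have hββ : β ^ (p * p) = β := by
      rw [show p * p = p ^ 2 by ring]; exact pow_card β
    rw [hββ]
    linear_combination (-(α ^ p)) * hddp + hkey
  have hZm : (β ^ p - α * d) ^ m = (β ^ p - α * d) ^ (m - 1) * (β ^ p - α * d) := by
    rw [← pow_succ, Nat.sub_add_cancel (by omega : 1 ≤ m)]
  have hδ2 : δ * ((β ^ (p + 1) - α ^ (p + 1)) * (β ^ p - α * d) ^ (m - 1)) = -1 := by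
    rw [hδ, hγ, hε, hZm]
    field_simp
    ring
  have h1 : δ ^ p * ((β ^ (p + 1) - α ^ (p + 1)) * ((β ^ p - α * d) ^ (m - 1)) ^ p)
      = -1 := by
    have h : (δ * ((β ^ (p + 1) - α ^ (p + 1)) * (β ^ p - α * d) ^ (m - 1))) ^ p
        = (-1 : F) ^ p := by rw [hδ2]
    rw [mul_pow, mul_pow, hNp, neg_one_pow_char F p] at h
    linear_combination h
  have hdz : d ^ (m - 1) * ((β ^ p - α * d) ^ p) ^ (m - 1)
      = b ^ (m - 1) * (β ^ p - α * d) ^ (m - 1) := by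
    rw [← mul_pow, hZp, mul_pow]
  have hbm2 : b ^ (m ^ 2) * d ^ (m - 1) = b * b ^ (m - 1) := by
    obtain ⟨k, rfl⟩ : ∃ k, m = k + 2 := ⟨m - 2, by omega⟩
    have hsub : k + 2 - 1 = k + 1 := rfl
    have he : (-1 : F) ^ ((k + 2) * (k + 1)) = 1 :=
      Even.neg_one_pow (by rw [mul_comm]; exact Nat.even_mul_succ_self (k + 1))
    rw [hsub, hd]
    calc b ^ ((k + 2) ^ 2) * ((-1:F) ^ (k + 2) * b ^ ((k + 2) * p)) ^ (k + 1)
        = (-1:F) ^ ((k + 2) * (k + 1)) * ((b ^ (p + 1)) ^ ((k + 2) * (k + 1)) * b ^ (k + 2)) := by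
          rw [mul_pow, ← pow_mul, ← pow_mul, ← pow_mul]
          ring
      _ = b * b ^ (k + 1) := by rw [he, hb, one_pow]; ring
  have hA : (β ^ (p + 1) - α ^ (p + 1)) * (β ^ p - α * d) ^ (m - 1) * b ^ (m - 1) ≠ 0 :=
    mul_ne_zero (mul_ne_zero hN (pow_ne_zero _ hZ)) (pow_ne_zero _ hb0)
  apply mul_right_cancel₀ hA
  linear_combination (b ^ (m ^ 2) * d ^ (m - 1)) * h1
    - (b ^ (m ^ 2) * δ ^ p * (β ^ (p + 1) - α ^ (p + 1))) * hdz
    - hbm2 - (b * b ^ (m - 1)) * hδ2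
end

section
/- Let p be a prime, F a finite field with p² elements, b ∈ F with b^{p+1} = 1, m a natural number, and d = (−1)^m · b^{mp}. Then for every x ∈ F, ((x^p − d·x)^m)^p = b^{m²} · (x^p − d·x)^m. -/
/-- over `F = 𝔽_{p²}`, with `b^(p+1) = 1` and `d = (−1)^m b^(mp)`,
for every `x ∈ F`, `((x^p − dx)^m)^p = b^(m²) (x^p − dx)^m`. -/
theorem hmd_pow_p {F : Type*} [Field F] [Fintype F] (p : ℕ) (hp : p.Prime)
    (hcard : Fintype.card F = p ^ 2) (b : F) (hb : b ^ (p + 1) = 1)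
    (m : ℕ) (d : F) (hd : d = (-1 : F) ^ m * b ^ (m * p)) :
    ∀ x : F, ((x ^ p - d * x) ^ m) ^ p = b ^ (m ^ 2) * (x ^ p - d * x) ^ m := by
  haveI : Fact p.Prime := ⟨hp⟩
  have hrc : ringChar F = p := by
    obtain ⟨n, hprime, hcardq⟩ := FiniteField.card F (ringChar F)
    have hdvd : ringChar F ∣ p ^ 2 := by
      rw [← hcard, hcardq]
      exact dvd_pow_self _ (by positivity)
    exact (Nat.prime_dvd_prime_iff_eq hprime hp).mp (hprime.dvd_of_dvd_pow hdvd)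
  haveI hFp : CharP F p := hrc ▸ ringChar.charP F
  have hpow : ∀ a : F, a ^ (p ^ 2) = a := fun a => by
    rw [← hcard]; exact FiniteField.pow_card a
  have hbm : b ^ (m * p * p) = b ^ m := by
    rw [show m * p * p = p ^ 2 * m by ring, pow_mul, hpow]
  have hneg : ((-1 : F)) ^ (m * p) = (-1 : F) ^ m := by
    rw [show m * p = p * m by ring, pow_mul, neg_one_pow_char F p]
  have hdp : d ^ p = (-1 : F) ^ m * b ^ m := by
    rw [hd, mul_pow, ← pow_mul, ← pow_mul, hbm, hneg]
  have hdd : d * d ^ p = 1 := by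
    have h1 : d * d ^ p = ((-1 : F) ^ (2 * m)) * (b ^ (p + 1)) ^ m := by
      rw [hdp, hd]; ring
    rw [h1, hb, one_pow, mul_one, Even.neg_one_pow ⟨m, by ring⟩]
  intro x
  have hy : (x ^ p - d * x) ^ p = -(d ^ p) * (x ^ p - d * x) := by
    rw [sub_pow_char, mul_pow, ← pow_mul, ← pow_two, hpow]
    linear_combination (-x : F) * hdd
  have hcoef : (-(d ^ p)) ^ m = b ^ (m ^ 2) := by
    have h1 : -(d ^ p) = (-1 : F) ^ (m + 1) * b ^ m := by
      rw [hdp, pow_succ]; ring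
    have heven : Even ((m + 1) * m) := by
      rw [Nat.mul_comm]; exact Nat.even_mul_succ_self m
    rw [h1, mul_pow, ← pow_mul, ← pow_mul, heven.neg_one_pow, one_mul,
      show m * m = m ^ 2 from (sq m).symm]
  rw [← pow_mul, mul_comm m p, pow_mul, hy, mul_pow, hcoef]
end
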